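/- arXiv:1707.07365 — 2 statements merged into one kernel-verified Lean document; each statement's English description precedes it below -/
import Mathlib

section
/- Let K be a simplicial complex on [m] and J ⊆ [m]. The multigraded component R^{*, 2J}(K) of the dg-algebra R*(K) is isomorphic as a cochain complex to the augmented simplicial cochain complex of the full subcomplex K_J, via the map sending the characteristic cochain χ_L of a simplex L ∈ K_J (with |L| = p+1) to ±u_{J∖L} v_L in R^{−|J|+p+1, 2J}(K), for a suitable choice of signs ε(L,J). -/
/-- An abstract simplicial complex on vertex type `V` (with the empty face included). -/
structure SC (V : Type) where
  faces : Set (Finset V)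
  empty_mem : ∅ ∈ faces
  down_closed : ∀ s ∈ faces, ∀ t ⊆ s, t ∈ faces

variable {V : Type}
/-- The sign `(-1)^{number of elements of J smaller than j}`. -/
def eps [LinearOrder V] (J : Finset V) (j : V) : ℤ :=
  (-1) ^ (J.filter (fun a => a < j)).card
section RAlgebra
variable [LinearOrder V]
attribute [local instance] Classical.propDecidable

/-- The pair `(J, I)` indexes an admissible monomial `u_J v_I` of
`R*(K) = Λ[u_1,…,u_m] ⊗ ℤ[K]/(v_i² = u_i v_i = 0)`. -/
def SC.admissible (K : SC V) (p : Finset V × Finset V) : Prop :=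
  Disjoint p.1 p.2 ∧ p.2 ∈ K.faces

/-- The underlying abelian group of the algebra
`R*(K) = Λ[u_1,…,u_m] ⊗ ℤ[K]/(v_i² = u_i v_i = 0)`:
the free abelian group on the monomials `u_J v_I`, `I ∈ K`, `I ∩ J = ∅`.
It is a cochain model of the moment-angle complex `Z_K`. -/
abbrev RK (K : SC V) : Type := {p : Finset V × Finset V // K.admissible p} →₀ ℤ

/-- The monomial `u_{p.1} v_{p.2}` of `R*(K)` (equal to `0` if `p` is not admissible,
which encodes the relations `v_i² = u_i v_i = 0` and the Stanley–Reisner relations). -/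
noncomputable def RK.mk (K : SC V) (p : Finset V × Finset V) : RK K :=
  if h : K.admissible p then Finsupp.single ⟨p, h⟩ 1 else 0

/-- The differential on a monomial: `d(u_J v_I) = Σ_{j∈J} ± u_{J∖j} v_{I∪j}`. -/
noncomputable def dB (K : SC V) (p : Finset V × Finset V) : RK K :=
  ∑ j ∈ p.1, eps p.1 j • RK.mk K (p.1.erase j, insert j p.2)

/-- The differential of `R*(K)` (sending `u_i ↦ v_i`, `v_i ↦ 0`). -/
noncomputable def dR (K : SC V) (x : RK K) : RK K :=
  x.sum fun p c => c • dB K p.val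

/-- The Koszul sign of the shuffle merging `u_J` and `u_{J'}`. -/
noncomputable def shuffleSign (J J' : Finset V) : ℤ :=
  (-1) ^ (∑ a ∈ J, (J'.filter (fun b => b < a)).card)

/-- Product of monomials of `R*(K)`. -/
noncomputable def mulB (K : SC V) (p q : Finset V × Finset V) : RK K :=
  if Disjoint (p.1 ∪ p.2) (q.1 ∪ q.2) then
    shuffleSign p.1 q.1 • RK.mk K (p.1 ∪ q.1, p.2 ∪ q.2)
  else 0

/-- The product of the algebra `R*(K)`. -/
noncomputable def mulR (K : SC V) (x y : RK K) : RK K :=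
  x.sum fun p c => y.sum fun q c' => (c * c') • mulB K p.val q.val

/-- `x` is homogeneous of total (cellular) degree `k`: `deg u_i = 1`, `deg v_i = 2`;
so `x` represents a class of `H^k(Z_K)`. -/
def homogTotal (K : SC V) (x : RK K) (k : ℕ) : Prop :=
  ∀ p ∈ x.support, p.val.1.card + 2 * p.val.2.card = k

/-- `x` is supported in multidegree `2S`, i.e. in the Hochster summand of the
full subcomplex `K_S`. -/
def homogM (K : SC V) (x : RK K) (S : Finset V) : Prop :=
  ∀ p ∈ x.support, p.val.1 ∪ p.val.2 = S

/-- `x` and `y` are cohomologous cocycles (differ by a coboundary). -/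
def Cohomologous (K : SC V) (x y : RK K) : Prop := ∃ t : RK K, x = y + dR K t

/-- The set of all cocycle-level values of the triple Massey product
`⟨[a], [b], [c]⟩` (with `k₁ = deg a`), saturated under coboundaries: all choices of
representing cocycles and of primitives `w₁, w₂` with `d w₁ = a'b'`, `d w₂ = b'c'`
give `±a'w₂ + w₁c'` up to a coboundary.  A cohomology class belongs to the Massey
product iff one (hence any) of its representing cocycles lies in this set. -/
def MasseySet (K : SC V) (k₁ : ℕ) (a b c : RK K) : Set (RK K) :=
  {z | ∃ a' b' c' w₁ w₂ t : RK K,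
    dR K a' = 0 ∧ dR K b' = 0 ∧ dR K c' = 0 ∧
    Cohomologous K a' a ∧ Cohomologous K b' b ∧ Cohomologous K c' c ∧
    dR K w₁ = mulR K a' b' ∧ dR K w₂ = mulR K b' c' ∧
    z = ((-1 : ℤ) ^ (k₁ + 1)) • mulR K a' w₂ + mulR K w₁ c' + dR K t}

end RAlgebra
section Cochains
variable [LinearOrder V]
attribute [local instance] Classical.propDecidable

/-- The augmented simplicial cochain group of the full subcomplex `K_J`:
`SCoch K J k` is spanned by the characteristic cochains `χ_L` of the
`(k-1)`-dimensional simplices `L ∈ K_J` (`k = |L|`; the case `k = 0`, `L = ∅`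
gives the augmentation `ℤ` in degree `-1`).  So `SCoch K J (p+1)` are the reduced
`p`-cochains of `K_J`. -/
abbrev SCoch (K : SC V) (J : Finset V) (k : ℕ) : Type :=
  {L : Finset V // L ∈ K.faces ∧ L ⊆ J ∧ L.card = k} →₀ ℤ

/-- The characteristic cochain `χ_L` (or `0` if `L` is not a `(k-1)`-simplex of `K_J`). -/
noncomputable def SCoch.mk (K : SC V) (J : Finset V) (k : ℕ) (L : Finset V) : SCoch K J k :=
  if h : L ∈ K.faces ∧ L ⊆ J ∧ L.card = k then Finsupp.single ⟨L, h⟩ 1 else 0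

/-- The simplicial coboundary map of the (augmented) cochain complex of `K_J`. -/
noncomputable def delta (K : SC V) (J : Finset V) (k : ℕ) (x : SCoch K J k) :
    SCoch K J (k + 1) :=
  x.sum fun L c => ∑ j ∈ J \ L.val, (c * eps L.val j) • SCoch.mk K J (k + 1) (insert j L.val)

end Cochains

/-- The cochain map `χ_L ↦ ε(L,J) u_{J∖L} v_L` (for a sign function `sgn`). -/
noncomputable def Phi {V : Type} [LinearOrder V] (K : SC V) (J : Finset V) (k : ℕ)
    (sgn : Finset V → ℤ) (x : SCoch K J k) : RK K :=
  x.sum fun L c => (c * sgn L.val) • RK.mk K (J \ L.val, L.val)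


section Stmt9Aux
variable {V : Type} [LinearOrder V]

/-- Our chosen sign function. -/
noncomputable def sg (J : Finset V) (L : Finset V) : ℤ :=
  (-1) ^ (∑ l ∈ L, (J.filter (fun a => a < l)).card)

lemma neg_one_pow_parity (a b : ℕ) (h : a % 2 = b % 2) : ((-1 : ℤ)) ^ a = (-1) ^ b := by
  rcases Nat.even_or_odd a with ha | ha
  · have hb : Even b := by rw [Nat.even_iff] at ha ⊢; omega
    rw [ha.neg_one_pow, hb.neg_one_pow]
  · have hb : Odd b := by rw [Nat.odd_iff] at ha ⊢; omega
    rw [ha.neg_one_pow, hb.neg_one_pow]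

lemma sg_mul_self (J L : Finset V) : sg J L * sg J L = 1 := by
  rw [sg, ← pow_add]
  rw [neg_one_pow_parity _ 0 (by omega), pow_zero]

lemma sg_units (J L : Finset V) : sg J L = 1 ∨ sg J L = -1 := by
  rcases Nat.even_or_odd (∑ l ∈ L, (J.filter (fun a => a < l)).card) with h | h
  · exact Or.inl (h.neg_one_pow)
  · exact Or.inr (h.neg_one_pow)

omit [LinearOrder V] in
lemma RK.mk_adm (K : SC V) {p : Finset V × Finset V} (h : K.admissible p) :
    RK.mk K p = Finsupp.single ⟨p, h⟩ 1 := by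
  simp [RK.mk, h]

omit [LinearOrder V] in
lemma RK.mk_not (K : SC V) {p : Finset V × Finset V} (h : ¬ K.admissible p) :
    RK.mk K p = 0 := by
  simp [RK.mk, h]

omit [LinearOrder V] in
lemma adm_sdiff [DecidableEq V] (K : SC V) (J : Finset V) {L : Finset V}
    (hL : L ∈ K.faces) : K.admissible (J \ L, L) := ⟨Finset.sdiff_disjoint, hL⟩

/-- The embedding `L ↦ (J \ L, L)` of index types. -/
noncomputable def embF (K : SC V) (J : Finset V) (k : ℕ) :
    {L : Finset V // L ∈ K.faces ∧ L ⊆ J ∧ L.card = k} ↪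
      {p : Finset V × Finset V // K.admissible p} :=
  ⟨fun L => ⟨(J \ L.1, L.1), Finset.sdiff_disjoint, L.2.1⟩,
   fun a b h => Subtype.ext (congrArg (fun q => q.1.2) h)⟩

/-- Pointwise rescaling by `sg J`. -/
noncomputable def scaleS (K : SC V) (J : Finset V) (k : ℕ) (x : SCoch K J k) : SCoch K J k :=
  x.sum fun L c => Finsupp.single L (sg J L.1 * c)

lemma scaleS_zero (K : SC V) (J : Finset V) (k : ℕ) : scaleS K J k 0 = 0 :=
  Finsupp.sum_zero_index

lemma scaleS_add (K : SC V) (J : Finset V) (k : ℕ) (x y : SCoch K J k) :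
    scaleS K J k (x + y) = scaleS K J k x + scaleS K J k y :=
  Finsupp.sum_add_index' (by simp) (by intros; simp [mul_add, Finsupp.single_add])

lemma scaleS_single (K : SC V) (J : Finset V) (k : ℕ) (L) (c : ℤ) :
    scaleS K J k (Finsupp.single L c) = Finsupp.single L (sg J L.1 * c) :=
  Finsupp.sum_single_index (by simp)

lemma scaleS_scaleS (K : SC V) (J : Finset V) (k : ℕ) (x : SCoch K J k) :
    scaleS K J k (scaleS K J k x) = x := by
  induction x using Finsupp.induction_linear with
  | zero => simp [scaleS_zero]
  | add a b ha hb => rw [scaleS_add, scaleS_add, ha, hb]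
  | single L c =>
      rw [scaleS_single, scaleS_single, ← mul_assoc, sg_mul_self, one_mul]

lemma Phi_zero (K : SC V) (J : Finset V) (k : ℕ) (s : Finset V → ℤ) :
    Phi K J k s 0 = 0 := Finsupp.sum_zero_index

lemma Phi_add (K : SC V) (J : Finset V) (k : ℕ) (s : Finset V → ℤ) (x y : SCoch K J k) :
    Phi K J k s (x + y) = Phi K J k s x + Phi K J k s y :=
  Finsupp.sum_add_index' (by simp) (by intros; simp [add_mul, add_smul])

lemma Phi_single (K : SC V) (J : Finset V) (k : ℕ) (s : Finset V → ℤ) (L) (c : ℤ) :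
    Phi K J k s (Finsupp.single L c) = (c * s L.1) • RK.mk K (J \ L.1, L.1) :=
  Finsupp.sum_single_index (by simp)

lemma Phi_eq_embDomain (K : SC V) (J : Finset V) (k : ℕ) (x : SCoch K J k) :
    Phi K J k (sg J) x = Finsupp.embDomain (embF K J k) (scaleS K J k x) := by
  induction x using Finsupp.induction_linear with
  | zero => simp [Phi_zero, scaleS_zero]
  | add a b ha hb =>
      rw [Phi_add, scaleS_add, Finsupp.embDomain_add, ha, hb]
  | single L c =>
      rw [Phi_single, scaleS_single, Finsupp.embDomain_single,
        RK.mk_adm K (adm_sdiff K J L.2.1)]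
      rw [Finsupp.smul_single, smul_eq_mul, mul_one, mul_comm]
      rfl

lemma dR_zero (K : SC V) : dR K 0 = 0 := Finsupp.sum_zero_index

lemma dR_add (K : SC V) (x y : RK K) : dR K (x + y) = dR K x + dR K y :=
  Finsupp.sum_add_index' (by simp) (fun _ _ _ => add_smul _ _ _)

lemma dR_single (K : SC V) (pt) (c : ℤ) :
    dR K (Finsupp.single pt c) = c • dB K pt.1 :=
  Finsupp.sum_single_index (zero_smul _ _)

lemma delta_zero (K : SC V) (J : Finset V) (k : ℕ) : delta K J k 0 = 0 :=
  Finsupp.sum_zero_index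

lemma delta_add (K : SC V) (J : Finset V) (k : ℕ) (x y : SCoch K J k) :
    delta K J k (x + y) = delta K J k x + delta K J k y :=
  Finsupp.sum_add_index' (by simp) (by intros; simp [add_mul, add_smul, Finset.sum_add_distrib])

section ClassicalDelta
attribute [local instance 2000] Classical.propDecidable

lemma delta_single (K : SC V) (J : Finset V) (k : ℕ) (L) (c : ℤ) :
    delta K J k (Finsupp.single L c) =
      ∑ j ∈ J \ L.val, (c * eps L.val j) • SCoch.mk K J (k + 1) (insert j L.val) :=
  Finsupp.sum_single_index (by simp)

end ClassicalDelta

lemma Phi_finsetSum (K : SC V) (J : Finset V) (k : ℕ) (s : Finset V → ℤ)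
    {α : Type*} (t : Finset α) (f : α → SCoch K J k) :
    Phi K J k s (∑ j ∈ t, f j) = ∑ j ∈ t, Phi K J k s (f j) := by
  classical
  induction t using Finset.cons_induction with
  | empty => simp [Phi_zero]
  | cons a t ha ih => rw [Finset.sum_cons, Finset.sum_cons, Phi_add, ih]

lemma filter_sdiff_lt (J L : Finset V) (j : V) :
    (J \ L).filter (fun a => a < j) = J.filter (fun a => a < j) \ L.filter (fun a => a < j) := by
  ext a
  simp only [Finset.mem_filter, Finset.mem_sdiff]
  tauto

lemma sign_key (J L : Finset V) (hLJ : L ⊆ J) {j : V} (hj : j ∈ J) (hjL : j ∉ L) :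
    sg J L * eps (J \ L) j = eps L j * sg J (insert j L) := by
  have hsub : L.filter (fun a => a < j) ⊆ J.filter (fun a => a < j) :=
    Finset.filter_subset_filter _ hLJ
  have hle : (L.filter (fun a => a < j)).card ≤ (J.filter (fun a => a < j)).card :=
    Finset.card_le_card hsub
  rw [sg, eps, eps, sg, Finset.sum_insert hjL, filter_sdiff_lt J L j,
    Finset.card_sdiff_of_subset hsub, ← pow_add, ← pow_add]
  exact neg_one_pow_parity _ _ (by omega)

/-- The key term-by-term identity, stated with abstract sets to avoid
`DecidableEq` instance mismatches. -/
lemma term_key (K : SC V) (J : Finset V) (k : ℕ) (L : Finset V)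
    (hLf : L ∈ K.faces) (hLJ : L ⊆ J) (hLc : L.card = k) (j : V)
    (hjJ : j ∈ J) (hjL : j ∉ L) (c : ℤ) (E N D : Finset V)
    (hE : E = J \ insert j L) (hN : N = insert j L) (hD : D = J \ L) :
    (c * sg J L) • (eps D j • RK.mk K (E, N)) =
      Phi K J (k + 1) (sg J) ((c * eps L j) • SCoch.mk K J (k + 1) N) := by
  subst hE hN hD
  rw [smul_smul]
  have hsub : insert j L ⊆ J := Finset.insert_subset hjJ hLJ
  have hcard : (insert j L).card = k + 1 := by
    rw [Finset.card_insert_of_notMem hjL, hLc]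
  by_cases hf : insert j L ∈ K.faces
  · rw [SCoch.mk, dif_pos (⟨hf, hsub, hcard⟩ : insert j L ∈ K.faces ∧ insert j L ⊆ J ∧
      (insert j L).card = k + 1), Finsupp.smul_single, smul_eq_mul, mul_one, Phi_single]
    congr 1
    rw [mul_assoc, mul_assoc]
    congr 1
    exact sign_key J L hLJ hjJ hjL
  · have hna : ¬ K.admissible (J \ insert j L, insert j L) := fun h => hf h.2
    rw [SCoch.mk, dif_neg (by tauto), RK.mk_not K hna]
    simp [Phi_zero]

lemma comm_single (K : SC V) (J : Finset V) (k : ℕ)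
    (L : {L : Finset V // L ∈ K.faces ∧ L ⊆ J ∧ L.card = k}) (c : ℤ) :
    dR K (Phi K J k (sg J) (Finsupp.single L c)) =
      Phi K J (k + 1) (sg J) (delta K J k (Finsupp.single L c)) := by
  obtain ⟨L, hLf, hLJ, hLc⟩ := L
  rw [Phi_single, RK.mk_adm K (adm_sdiff K J hLf), Finsupp.smul_single, smul_eq_mul, mul_one,
    dR_single, delta_single, Phi_finsetSum]
  simp only [dB]
  rw [Finset.smul_sum]
  refine Finset.sum_congr ?_ (fun j hj => ?_)
  · ext a
    simp only [Finset.mem_sdiff]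
  · simp only [Finset.mem_sdiff] at hj
    obtain ⟨hjJ, hjL⟩ := hj
    refine term_key K J k L hLf hLJ hLc j hjJ hjL c _ _ _ ?_ ?_ rfl
    · ext a
      simp only [Finset.mem_erase, Finset.mem_sdiff, Finset.mem_insert]
      tauto
    · ext a
      simp only [Finset.mem_insert]

lemma comm_all (K : SC V) (J : Finset V) (k : ℕ) (x : SCoch K J k) :
    dR K (Phi K J k (sg J) x) = Phi K J (k + 1) (sg J) (delta K J k x) := by
  induction x using Finsupp.induction_linear with
  | zero => simp [Phi_zero, dR_zero, delta_zero]
  | add a b ha hb => rw [Phi_add, dR_add, delta_add, Phi_add, ha, hb]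
  | single L c => exact comm_single K J k L c

end Stmt9Aux

/-- The multigraded component `R^{*, 2J}(K)` is isomorphic, as a cochain complex, to
the augmented simplicial cochain complex of the full subcomplex `K_J`, via
`χ_L ↦ ε(L,J) u_{J∖L} v_L` for a suitable choice of signs `ε(L,J) = ±1`: this map
commutes with the differentials, is injective, and its image is exactly the
multigraded component of multidegree `2J` and cohomological position `|L| = k`. -/
theorem stmt9 {V : Type} [LinearOrder V] (K : SC V) (J : Finset V) :
    ∃ sgn : Finset V → ℤ, (∀ L : Finset V, sgn L = 1 ∨ sgn L = -1) ∧
      ∀ k : ℕ,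
        (∀ x : SCoch K J k,
          dR K (Phi K J k sgn x) = Phi K J (k + 1) sgn (delta K J k x)) ∧
        Function.Injective (Phi K J k sgn) ∧
        Set.range (Phi K J k sgn) =
          {y : RK K | ∀ p ∈ y.support, p.val.1 ∪ p.val.2 = J ∧ p.val.2.card = k} := by
  classical
  refine ⟨sg J, sg_units J, fun k => ⟨comm_all K J k, ?_, ?_⟩⟩
  · -- injectivity
    intro x y hxy
    rw [Phi_eq_embDomain, Phi_eq_embDomain] at hxy
    have h1 := Finsupp.embDomain_injective (embF K J k) hxy
    have h2 := congrArg (scaleS K J k) h1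
    rwa [scaleS_scaleS, scaleS_scaleS] at h2
  · -- range
    ext y
    constructor
    · rintro ⟨x, rfl⟩ p hp
      rw [Phi_eq_embDomain] at hp
      rw [Finsupp.mem_support_iff, ← Finsupp.mem_support_iff] at hp
      rw [Finsupp.support_embDomain, Finset.mem_map] at hp
      obtain ⟨L, hL, rfl⟩ := hp
      constructor
      · exact Finset.sdiff_union_of_subset L.2.2.1
      · exact L.2.2.2
    · intro hy
      refine ⟨∑ p ∈ y.support.attach,
        Finsupp.single ⟨p.1.1.2, p.1.2.2, ((hy p.1 p.2).1 ▸ Finset.subset_union_right),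
          (hy p.1 p.2).2⟩ (sg J p.1.1.2 * y p.1), ?_⟩
      rw [Phi_finsetSum]
      have key : ∀ p ∈ y.support.attach,
          Phi K J k (sg J) (Finsupp.single
            (⟨p.1.1.2, p.1.2.2, ((hy p.1 p.2).1 ▸ Finset.subset_union_right), (hy p.1 p.2).2⟩ :
              {L : Finset V // L ∈ K.faces ∧ L ⊆ J ∧ L.card = k})
            (sg J p.1.1.2 * y p.1)) = Finsupp.single p.1 (y p.1) := by
        intro p _
        rw [Phi_single]
        have hcoef : sg J p.1.1.2 * y p.1 * sg J p.1.1.2 = y p.1 := by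
          rw [mul_comm (sg J p.1.1.2) (y p.1), mul_assoc, sg_mul_self, mul_one]
        rw [hcoef]
        have hfst : J \ p.1.1.2 = p.1.1.1 := by
          rw [← (hy p.1 p.2).1, Finset.union_sdiff_cancel_right p.1.2.1]
        have hadm : K.admissible (J \ p.1.1.2, p.1.1.2) := adm_sdiff K J p.1.2.2
        rw [RK.mk_adm K hadm, Finsupp.smul_single, smul_eq_mul, mul_one]
        congr 1
        exact Subtype.ext (Prod.ext hfst rfl)
      rw [Finset.sum_congr rfl key]
      rw [Finset.sum_attach y.support (fun p => Finsupp.single p (y p))]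
      exact Finsupp.sum_single y
end

section
/- For any Pogorelov polytope P, there exist a natural number n ≥ 5, l ≥ 5 and pairwise distinct facets F₁, …, F_{l+n−1} such that F₁, F₂, F₃ pairwise intersect in a common vertex, |F₁| = 5, |F₂| = l, |F₃| = n, and the remaining l + n − 4 facets (F₄, F₈, …, F_{l+3}, F₅, F_{l+4}, …, F_{l+n−1}, F₆, F₇) form a belt surrounding the triple {F₁, F₂, F₃}. -/
variable {V : Type}
section Sphere
variable [DecidableEq V]

/-- The degree of a vertex: the number of vertices adjacent to it. Dually, the number
of edges of the facet of the simple 3-polytope corresponding to `v`. -/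
noncomputable def SC.vdeg (K : SC V) (v : V) : ℕ :=
  Set.ncard {u | u ≠ v ∧ ({v, u} : Finset V) ∈ K.faces}

/-- `K` is a simplicial 2-sphere: pure 2-dimensional, every vertex present, each edge in
exactly two triangles, vertex links connected, connected, and Euler characteristic 2.
Dually, the boundary complex of a simple 3-polytope. -/
def IsSphere2 [Fintype V] (K : SC V) : Prop :=
  (∀ v : V, ({v} : Finset V) ∈ K.faces) ∧
  (∀ s ∈ K.faces, s.card ≤ 3) ∧
  (∀ s ∈ K.faces, ∃ t ∈ K.faces, s ⊆ t ∧ t.card = 3) ∧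
  (∀ e ∈ K.faces, e.card = 2 → Set.ncard {t | t ∈ K.faces ∧ t.card = 3 ∧ e ⊆ t} = 2) ∧
  (∀ (v : V) (t t' : Finset V), t ∈ K.faces → t' ∈ K.faces → t.card = 3 → t'.card = 3 →
    v ∈ t → v ∈ t' →
    Relation.ReflTransGen
      (fun a b => a ∈ K.faces ∧ b ∈ K.faces ∧ a.card = 3 ∧ b.card = 3 ∧
        v ∈ a ∧ v ∈ b ∧ (a ∩ b).card = 2) t t') ∧
  (∀ u w : V, Relation.ReflTransGen (fun a b => a ≠ b ∧ ({a, b} : Finset V) ∈ K.faces) u w) ∧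
  ((Set.ncard {s | s ∈ K.faces ∧ s.card = 1} : ℤ)
    - (Set.ncard {s | s ∈ K.faces ∧ s.card = 2} : ℤ)
    + (Set.ncard {s | s ∈ K.faces ∧ s.card = 3} : ℤ) = 2)

/-- `K` is flag: every nonempty collection of pairwise adjacent vertices spans a face.
Dually: every family of pairwise intersecting facets of `P` has a common point. -/
def IsFlag (K : SC V) : Prop :=
  ∀ s : Finset V, s.Nonempty → (∀ u ∈ s, ({u} : Finset V) ∈ K.faces) →
    (∀ u ∈ s, ∀ w ∈ s, u ≠ w → ({u, w} : Finset V) ∈ K.faces) → s ∈ K.faces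

/-- A `k`-belt, dually: a chordless cycle `f 0, f 1, …, f (k-1)` in `K` spanning no
2-simplex.  The corresponding facets are pairwise distinct and only consecutive ones
(in the cyclic order) intersect. -/
def IsBelt (K : SC V) (k : ℕ) (f : ZMod k → V) : Prop :=
  3 ≤ k ∧ Function.Injective f ∧
  (∀ i : ZMod k, ({f i, f (i + 1)} : Finset V) ∈ K.faces) ∧
  (∀ i j : ZMod k, i ≠ j → ({f i, f j} : Finset V) ∈ K.faces → (j = i + 1 ∨ i = j + 1)) ∧
  (∀ i j l : ZMod k, i ≠ j → j ≠ l → i ≠ l → ({f i, f j, f l} : Finset V) ∉ K.faces)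

/-- `P` has a `k`-belt of facets. -/
def HasBelt (K : SC V) (k : ℕ) : Prop := ∃ f : ZMod k → V, IsBelt K k f

/-- `K` is the boundary of the 3-simplex (dually, `P = Δ³`). -/
def IsSimplexBoundary (K : SC V) : Prop :=
  ∃ s : Finset V, s.card = 4 ∧ K.faces = {t | t ⊆ s ∧ t ≠ s}

/-- A Pogorelov polytope: a (simple 3-dimensional) flag polytope without 4-belts,
encoded via its dual simplicial 2-sphere. -/
def IsPogorelov (K : SC V) : Prop := IsFlag K ∧ ¬ HasBelt K 4

/-- The facet corresponding to `v`, having `K.vdeg v` edges, is surrounded by a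
`(K.vdeg v)`-belt consisting exactly of the facets adjacent to it. -/
def VertexSurrounded (K : SC V) (v : V) : Prop :=
  ∃ f : ZMod (K.vdeg v) → V, IsBelt K (K.vdeg v) f ∧
    Set.range f = {u | u ≠ v ∧ ({v, u} : Finset V) ∈ K.faces}

/-- Every 3-cycle of `K` bounds a face (no empty triangles). -/
def NoEmptyTriangle (K : SC V) : Prop :=
  ∀ a b c : V, a ≠ b → b ≠ c → a ≠ c →
    ({a, b} : Finset V) ∈ K.faces → ({b, c} : Finset V) ∈ K.faces →
    ({a, c} : Finset V) ∈ K.faces → ({a, b, c} : Finset V) ∈ K.faces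

/-- `K` contains a chordless 4-cycle. -/
def HasChordless4 (K : SC V) : Prop :=
  ∃ f : ZMod 4 → V, Function.Injective f ∧
    (∀ i : ZMod 4, ({f i, f (i + 1)} : Finset V) ∈ K.faces) ∧
    ({f 0, f 2} : Finset V) ∉ K.faces ∧ ({f 1, f 3} : Finset V) ∉ K.faces

end Sphere
/-- The label (1-based, as in the paper) of the `p`-th facet of the belt
`(F₄, F₈, …, F_{l+3}, F₅, F_{l+4}, …, F_{l+n−1}, F₆, F₇)` surrounding `{F₁, F₂, F₃}`. -/
def beltLabel (l n p : ℕ) : ℕ :=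
  if p = 0 then 4
  else if p ≤ l - 4 then p + 7
  else if p = l - 3 then 5
  else if p ≤ l + n - 7 then p + 6
  else if p = l + n - 6 then 6
  else 7



section Cycle
variable {V : Type} [DecidableEq V]

private lemma two_set_mem {N : Set V} {a b y : V} (h2 : N.ncard = 2)
    (ha : a ∈ N) (hb : b ∈ N) (hab : a ≠ b) (hy : y ∈ N) : y = a ∨ y = b := by
  obtain ⟨c, d, hcd, rfl⟩ := Set.ncard_eq_two.1 h2
  rcases ha with rfl | rfl <;> rcases hb with rfl | rfl <;> simp_all <;> tauto

theorem cycle_of_two_regular (S : Finset V) (hne : S.Nonempty)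
    (A : V → V → Prop)
    (hsym : ∀ u w, A u w → A w u)
    (hmem : ∀ u w, A u w → u ∈ S ∧ w ∈ S ∧ u ≠ w)
    (h2 : ∀ u ∈ S, Set.ncard {w | A u w} = 2)
    (hconn : ∀ u ∈ S, ∀ w ∈ S, Relation.ReflTransGen A u w) :
    ∃ f : ZMod S.card → V, 3 ≤ S.card ∧ Function.Injective f ∧
      Set.range f = ↑S ∧ (∀ i, A (f i) (f (i + 1))) ∧
      (∀ i j, i ≠ j → A (f i) (f j) → j = i + 1 ∨ i = j + 1) := by
  classical
  have key : ∀ u ∈ S, ∀ w, A u w →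
      ∃ x, A u x ∧ x ≠ w ∧ ∀ y, A u y → y = w ∨ y = x := by
    intro u hu w hw
    obtain ⟨a, b, hab, hN⟩ := Set.ncard_eq_two.1 (h2 u hu)
    have hwm : w ∈ ({a, b} : Set V) := hN ▸ hw
    have hma : A u a := by
      have : a ∈ {w | A u w} := by rw [hN]; simp
      exact this
    have hmb : A u b := by
      have : b ∈ {w | A u w} := by rw [hN]; simp
      exact this
    have hall : ∀ y, A u y → y = a ∨ y = b := by
      intro y hy
      have : y ∈ ({a, b} : Set V) := hN ▸ hy
      simpa using this
    rcases hwm with rfl | rfl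
    · exact ⟨b, hmb, hab.symm, fun y hy => hall y hy⟩
    · exact ⟨a, hma, hab, fun y hy => (hall y hy).symm⟩
  let other : V → V → V := fun u w =>
    if h : ∃ x, A u x ∧ x ≠ w ∧ ∀ y, A u y → y = w ∨ y = x then h.choose else u
  have hother : ∀ u w, u ∈ S → A u w →
      A u (other u w) ∧ other u w ≠ w ∧ ∀ y, A u y → y = w ∨ y = other u w := by
    intro u w hu hw
    have h := key u hu w hw
    simp only [other, dif_pos h]
    exact h.choose_spec
  obtain ⟨s0, hs0⟩ := hne
  have hN0 : {w | A s0 w}.ncard = 2 := h2 s0 hs0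
  obtain ⟨s1, hs1⟩ : {w | A s0 w}.Nonempty :=
    Set.nonempty_of_ncard_ne_zero (by omega)
  let p : ℕ → V × V := fun n => Nat.rec (s0, s1) (fun _ q => (q.2, other q.2 q.1)) n
  let g : ℕ → V := fun n => (p n).1
  have hg0 : g 0 = s0 := rfl
  have hg1 : g 1 = s1 := rfl
  have hstep : ∀ n, g (n+2) = other (g (n+1)) (g n) := fun n => rfl
  have hinv : ∀ n, A (g n) (g (n+1)) := by
    intro n
    induction n with
    | zero => exact hs1
    | succ m ih =>
      have hm : g (m+1) ∈ S := (hmem _ _ ih).2.1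
      have := hother (g (m+1)) (g m) hm (hsym _ _ ih)
      rw [hstep m]
      exact this.1
  have hne2 : ∀ n, g (n+2) ≠ g n := by
    intro n
    have hm : g (n+1) ∈ S := (hmem _ _ (hinv n)).2.1
    have := hother (g (n+1)) (g n) hm (hsym _ _ (hinv n))
    rw [hstep n]; exact this.2.1
  have hgS : ∀ n, g n ∈ S := fun n => (hmem _ _ (hinv n)).1
  have nbr : ∀ n y, A (g (n+1)) y → y = g n ∨ y = g (n+2) := by
    intro n y hy
    have hm : g (n+1) ∈ S := (hmem _ _ (hinv n)).2.1
    have := hother (g (n+1)) (g n) hm (hsym _ _ (hinv n))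
    rcases this.2.2 y hy with h | h
    · exact Or.inl h
    · right; rw [hstep n]; exact h
  have hPex : ∃ n, ∃ m < n, g n = g m := by
    obtain ⟨i, hi, j, hj, hij, hgij⟩ :=
      Finset.exists_ne_map_eq_of_card_lt_of_maps_to
        (s := Finset.range (S.card + 1)) (t := S)
        (by simp) (fun n _ => hgS n)
    rcases lt_or_gt_of_ne hij with h | h
    · exact ⟨j, i, h, hgij.symm⟩
    · exact ⟨i, j, h, hgij⟩
  set r := Nat.find hPex with hrdef
  obtain ⟨m, hmr, hgrm⟩ : ∃ m < r, g r = g m := Nat.find_spec hPex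
  have hinj : ∀ i < r, ∀ j < r, g i = g j → i = j := by
    intro i hi j hj hij
    by_contra hne'
    rcases lt_or_gt_of_ne hne' with h | h
    · exact absurd ⟨i, h, hij.symm⟩ (Nat.find_min hPex hj)
    · exact absurd ⟨j, h, hij⟩ (Nat.find_min hPex hi)
  have h10 : g 1 ≠ g 0 := (hmem _ _ (hinv 0)).2.2.symm
  have h21 : g 2 ≠ g 1 := (hmem _ _ (hinv 1)).2.2.symm
  have h20 : g 2 ≠ g 0 := hne2 0
  have hr3 : 3 ≤ r := by
    rcases Nat.lt_or_ge r 3 with h | h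
    · exfalso
      have hr12 : r = 1 ∨ r = 2 := by omega
      rcases hr12 with h1' | h2''
      · rw [h1'] at hgrm hmr
        have hm' : m = 0 := by omega
        rw [hm'] at hgrm; exact h10 hgrm
      · rw [h2''] at hgrm hmr
        have hm0 : m = 0 ∨ m = 1 := by omega
        rcases hm0 with hm | hm <;> rw [hm] at hgrm
        · exact h20 hgrm
        · exact h21 hgrm
    · exact h
  have hm0 : m = 0 := by
    by_contra hm
    have hmpos : 1 ≤ m := Nat.one_le_iff_ne_zero.2 hm
    have hmlt : m < r - 1 := by
      rcases Nat.lt_or_ge m (r-1) with h | h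
      · exact h
      · exfalso
        have hmeq : m = r - 1 := by omega
        have hd := (hmem _ _ (hinv (r-1))).2.2
        rw [show r - 1 + 1 = r by omega] at hd
        rw [hmeq] at hgrm
        exact hd hgrm.symm
    have hA : A (g m) (g (r-1)) := by
      have := hsym _ _ (hinv (r-1))
      rw [show r - 1 + 1 = r by omega, hgrm] at this
      exact this
    have := nbr (m-1) (g (r-1)) (by rw [show m - 1 + 1 = m by omega]; exact hA)
    rw [show m - 1 + 2 = m + 1 by omega] at this
    rcases this with h | h
    · have := hinj (r-1) (by omega) (m-1) (by omega) h
      omega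
    · rcases Nat.lt_or_ge (m+1) (r-1) with h' | h'
      · have := hinj (r-1) (by omega) (m+1) (by omega) h
        omega
      · have hreq : r = m + 2 := by omega
        rw [hreq] at hgrm
        exact hne2 m hgrm
  rw [hm0] at hgrm
  -- closure of the visited set
  have hclosed : ∀ i < r, ∀ y, A (g i) y → ∃ j < r, y = g j := by
    intro i hi y hy
    rcases Nat.eq_zero_or_pos i with rfl | hipos
    · have h0 : g ((r-1)+1) = g 0 := by rw [show r-1+1 = r by omega]; exact hgrm
      have := nbr (r-1) y (by rw [h0]; exact hy)
      rw [show r - 1 + 2 = r + 1 by omega] at this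
      rcases this with h | h
      · exact ⟨r-1, by omega, h⟩
      · have hA1 : A (g 0) (g (r+1)) := by
          have := hinv r
          rwa [hgrm] at this
        have hA2 : A (g 0) (g 1) := hinv 0
        have hA3 : A (g 0) (g (r-1)) := by
          have := hsym _ _ (hinv (r-1))
          rwa [show r-1+1 = r by omega, hgrm] at this
        have hne13 : g 1 ≠ g (r-1) := fun hh => by
          have := hinj 1 (by omega) (r-1) (by omega) hh; omega
        have := two_set_mem (h2 (g 0) (hgS 0)) hA2 hA3 hne13 hA1
        rcases this with h' | h'
        · exact ⟨1, by omega, by rw [h, h']⟩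
        · exfalso
          have := hne2 (r-1)
          rw [show r-1+2 = r+1 by omega] at this; exact this h'
    · have := nbr (i-1) y (by rw [show i-1+1 = i by omega]; exact hy)
      rw [show i - 1 + 2 = i + 1 by omega] at this
      rcases this with h | h
      · exact ⟨i-1, by omega, h⟩
      · rcases Nat.lt_or_ge (i+1) r with h' | h'
        · exact ⟨i+1, h', h⟩
        · have : i + 1 = r := by omega
          rw [this, hgrm] at h
          exact ⟨0, by omega, h⟩
  have hsurj : ∀ w ∈ S, ∃ j < r, w = g j := by
    intro w hw
    have hpath := hconn s0 hs0 w hw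
    clear hw
    induction hpath with
    | refl => exact ⟨0, by omega, hg0.symm⟩
    | tail hp hA ih =>
      obtain ⟨j, hj, rfl⟩ := ih
      obtain ⟨j', hj', h'⟩ := hclosed j hj _ hA
      exact ⟨j', hj', h'⟩
  have hcard : r = S.card := by
    have himg : Finset.image g (Finset.range r) = S := by
      apply Finset.Subset.antisymm
      · intro w hw
        simp only [Finset.mem_image, Finset.mem_range] at hw
        obtain ⟨j, _, rfl⟩ := hw
        exact hgS j
      · intro w hw
        obtain ⟨j, hj, rfl⟩ := hsurj w hw
        simp only [Finset.mem_image, Finset.mem_range]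
        exact ⟨j, hj, rfl⟩
    calc r = (Finset.range r).card := by simp
    _ = (Finset.image g (Finset.range r)).card := by
        rw [Finset.card_image_of_injOn]
        intro a ha b hb hab
        simp only [Finset.coe_range, Set.mem_Iio] at ha hb
        exact hinj a ha b hb hab
    _ = S.card := by rw [himg]
  haveI : NeZero S.card := ⟨by omega⟩
  haveI : Fact (1 < S.card) := ⟨by omega⟩
  have hvlt : ∀ i : ZMod S.card, i.val < r := by
    intro i; rw [hcard]; exact ZMod.val_lt i
  have hveq : ∀ i j : ZMod S.card, i.val = j.val → i = j :=
    fun i j h => ZMod.val_injective _ h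
  refine ⟨fun i => g i.val, by omega, ?_, ?_, ?_, ?_⟩
  · intro i j hij
    exact hveq i j (hinj _ (hvlt i) _ (hvlt j) hij)
  · apply Set.Subset.antisymm
    · rintro w ⟨i, rfl⟩
      exact hgS i.val
    · intro w hw
      obtain ⟨j, hj, rfl⟩ := hsurj w hw
      exact ⟨(j : ZMod S.card), by simp [ZMod.val_cast_of_lt (hcard ▸ hj)]⟩
  · intro i
    have hv : (i + 1).val = (i.val + 1) % S.card := by
      rw [ZMod.val_add, ZMod.val_one]
    rcases Nat.lt_or_ge (i.val + 1) S.card with h | h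
    · simp only [hv, Nat.mod_eq_of_lt h]
      exact hinv i.val
    · have hiv : i.val = S.card - 1 := by have := ZMod.val_lt i; omega
      have : (i + 1).val = 0 := by rw [hv, hiv, show S.card - 1 + 1 = S.card by omega, Nat.mod_self]
      simp only [this, hiv]
      have := hinv (r - 1)
      rw [show r - 1 + 1 = r by omega, hgrm, hcard] at this
      exact this
  · intro i j hij hA
    have hvij : i.val ≠ j.val := fun h => hij (hveq _ _ h)
    change A (g i.val) (g j.val) at hA
    have ha := hvlt i
    have hb := hvlt j
    have hmain : j.val = i.val + 1 ∨ (j.val + 1) % S.card = i.val ∨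
        (i.val + 1) % S.card = 0 ∧ j.val = 0 ∨ i.val = 0 ∧ j.val = r - 1 := by
      rcases Nat.eq_zero_or_pos i.val with h0 | hpos
      · -- i.val = 0
        rw [h0] at hA
        have hA1 : A (g 0) (g j.val) := hA
        have hA2 : A (g 0) (g 1) := hinv 0
        have hA3 : A (g 0) (g (r-1)) := by
          have := hsym _ _ (hinv (r-1))
          rwa [show r-1+1 = r by omega, hgrm] at this
        have hne13 : g 1 ≠ g (r-1) := fun hh => by
          have := hinj 1 (by omega) (r-1) (by omega) hh; omega
        rcases two_set_mem (h2 (g 0) (hgS 0)) hA2 hA3 hne13 hA1 with h' | h'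
        · left; rw [h0, hinj j.val hb 1 (by omega) h']
        · right; right; right; exact ⟨h0, hinj j.val hb (r-1) (by omega) h'⟩
      · have := nbr (i.val - 1) (g j.val)
          (by rw [show i.val - 1 + 1 = i.val by omega]; exact hA)
        rw [show i.val - 1 + 2 = i.val + 1 by omega] at this
        rcases this with h | h
        · right; left
          have := hinj j.val hb (i.val - 1) (by omega) h
          rw [this, show i.val - 1 + 1 = i.val by omega]
          exact Nat.mod_eq_of_lt (by omega)
        · rcases Nat.lt_or_ge (i.val+1) r with h' | h'
          · left; exact hinj j.val hb (i.val+1) h' h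
          · have hieq : i.val + 1 = r := by omega
            rw [hieq, hgrm] at h
            right; right; left
            refine ⟨by rw [hieq, hcard]; exact Nat.mod_self _, ?_⟩
            exact hinj j.val hb 0 (by omega) h
    have hv1 : ∀ a : ZMod S.card, (a + 1).val = (a.val + 1) % S.card := by
      intro a; rw [ZMod.val_add, ZMod.val_one]
    rcases hmain with h | h | ⟨h1, h2'⟩ | ⟨h1, h2'⟩
    · left
      apply hveq
      rw [hv1, Nat.mod_eq_of_lt (by omega : i.val + 1 < S.card), h]
    · right
      apply hveq
      rw [hv1, h]
    · left
      apply hveq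
      rw [hv1, h1, h2']
    · right
      apply hveq
      rw [hv1, h2', show (r - 1 + 1) = S.card by omega, Nat.mod_self, h1]
end Cycle

section Helpers
variable {V : Type} [DecidableEq V] [Fintype V]

lemma sub_pair_mem (K : SC V) {t : Finset V} (ht : t ∈ K.faces) {a b : V}
    (ha : a ∈ t) (hb : b ∈ t) : ({a, b} : Finset V) ∈ K.faces :=
  K.down_closed t ht _ (by intro x hx; simp at hx; rcases hx with rfl | rfl <;> assumption)

lemma sub_single_mem (K : SC V) {t : Finset V} (ht : t ∈ K.faces) {a : V}
    (ha : a ∈ t) : ({a} : Finset V) ∈ K.faces :=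
  K.down_closed t ht _ (by simpa using ha)

lemma flag_triangle (K : SC V) (hF : IsFlag K) {v a b : V}
    (h1 : v ≠ a) (h2 : v ≠ b) (h3 : a ≠ b)
    (hva : ({v, a} : Finset V) ∈ K.faces) (hvb : ({v, b} : Finset V) ∈ K.faces)
    (hab : ({a, b} : Finset V) ∈ K.faces) :
    ({v, a, b} : Finset V) ∈ K.faces := by
  apply hF
  · exact ⟨v, by simp⟩
  · intro u hu
    simp only [Finset.mem_insert, Finset.mem_singleton] at hu
    rcases hu with rfl | rfl | rfl
    · exact sub_single_mem K hva (by simp)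
    · exact sub_single_mem K hva (by simp)
    · exact sub_single_mem K hvb (by simp)
  · intro u hu w hw huw
    simp only [Finset.mem_insert, Finset.mem_singleton] at hu hw
    rcases hu with rfl | rfl | rfl <;> rcases hw with rfl | rfl | rfl <;>
      first
      | exact absurd rfl huw
      | assumption
      | (rw [Finset.pair_comm]; assumption)

lemma card3_triple {t : Finset V} (ht : t.card = 3) {v u : V} (hv : v ∈ t) (hu : u ∈ t)
    (hvu : v ≠ u) : ∃ w, w ≠ v ∧ w ≠ u ∧ t = {v, u, w} := by
  have hsub : {v, u} ⊆ t := by intro x hx; simp at hx; rcases hx with rfl | rfl <;> assumption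
  have hcard2 : ({v, u} : Finset V).card = 2 := Finset.card_pair hvu
  have h1 : (t \ {v, u}).card = 1 := by
    rw [Finset.card_sdiff_of_subset hsub, ht, hcard2]
  obtain ⟨w, hw⟩ := Finset.card_eq_one.1 h1
  have hwmem : w ∈ t \ {v, u} := by rw [hw]; simp
  simp only [Finset.mem_sdiff, Finset.mem_insert, Finset.mem_singleton] at hwmem
  push_neg at hwmem
  refine ⟨w, hwmem.2.1, hwmem.2.2, ?_⟩
  symm
  apply Finset.eq_of_subset_of_card_le
  · intro x hx
    simp only [Finset.mem_insert, Finset.mem_singleton] at hx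
    rcases hx with rfl | rfl | rfl
    · exact hv
    · exact hu
    · exact hwmem.1
  · rw [ht, Finset.card_insert_of_notMem (by simp [hvu, Ne.symm hwmem.2.1]),
      Finset.card_pair (Ne.symm hwmem.2.2)]

theorem vertexSurrounded_of_flag (K : SC V) (hS : IsSphere2 K) (hF : IsFlag K) (v : V) :
    VertexSurrounded K v := by
  classical
  obtain ⟨hvert, hdim, hpure, hedge2, hlinkconn, hconn0, heuler⟩ := hS
  set Sset : Set V := {u | u ≠ v ∧ ({v, u} : Finset V) ∈ K.faces} with hSdef
  have hFin : Sset.Finite := Set.toFinite _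
  set Sf : Finset V := hFin.toFinset with hSfdef
  have hmemS : ∀ u, u ∈ Sf ↔ (u ≠ v ∧ ({v, u} : Finset V) ∈ K.faces) := by
    intro u; rw [hSfdef, Set.Finite.mem_toFinset]; rfl
  have hdeg : K.vdeg v = Sf.card := by
    show Sset.ncard = Sf.card
    exact Set.ncard_eq_toFinset_card _ hFin
  set A : V → V → Prop := fun u w =>
    u ≠ w ∧ u ∈ Sset ∧ w ∈ Sset ∧ ({u, w} : Finset V) ∈ K.faces with hAdef
  have hsym : ∀ u w, A u w → A w u := by
    rintro u w ⟨h1, h2, h3, h4⟩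
    exact ⟨h1.symm, h3, h2, by rwa [Finset.pair_comm]⟩
  have hmem : ∀ u w, A u w → u ∈ Sf ∧ w ∈ Sf ∧ u ≠ w := by
    rintro u w ⟨h1, h2, h3, h4⟩
    exact ⟨(hmemS u).2 h2, (hmemS w).2 h3, h1⟩
  have h2' : ∀ u ∈ Sf, Set.ncard {w | A u w} = 2 := by
    intro u hu
    rw [hmemS] at hu
    obtain ⟨huv, hue⟩ := hu
    have hcard2 : ({v, u} : Finset V).card = 2 := Finset.card_pair (Ne.symm huv)
    have htri := hedge2 _ hue hcard2
    have himg : {t | t ∈ K.faces ∧ t.card = 3 ∧ ({v, u} : Finset V) ⊆ t} =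
        (fun w => ({v, u, w} : Finset V)) '' {w | A u w} := by
      ext t
      constructor
      · rintro ⟨htf, htc, hts⟩
        have hvt : v ∈ t := hts (by simp)
        have hut : u ∈ t := hts (by simp)
        obtain ⟨w, hwv, hwu, rfl⟩ := card3_triple htc hvt hut (Ne.symm huv)
        exact ⟨w, ⟨Ne.symm hwu, ⟨huv, hue⟩,
          ⟨hwv, sub_pair_mem K htf hvt (by simp)⟩,
          sub_pair_mem K htf (by simp) (by simp)⟩, rfl⟩
      · rintro ⟨w, ⟨huw, huS, hwS, he⟩, rfl⟩
        have hvw : v ≠ w := Ne.symm hwS.1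
        refine ⟨flag_triangle K hF (Ne.symm huv) hvw huw hue hwS.2 he, ?_, ?_⟩
        · rw [Finset.card_insert_of_notMem (by simp [Ne.symm huv, hvw]),
            Finset.card_pair huw]
        · intro x hx; simp at hx; rcases hx with rfl | rfl <;> simp
    have hinjOn : Set.InjOn (fun w => ({v, u, w} : Finset V)) {w | A u w} := by
      rintro w ⟨hw1, _, hwS, _⟩ w' ⟨hw1', _, hwS', _⟩ heq
      have heq' : ({v, u, w} : Finset V) = {v, u, w'} := heq
      have : w ∈ ({v, u, w'} : Finset V) := by rw [← heq']; simp
      simp only [Finset.mem_insert, Finset.mem_singleton] at this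
      rcases this with h | h | h
      · exact absurd h hwS.1
      · exact absurd h (Ne.symm hw1)
      · exact h
    rw [himg, Set.ncard_image_of_injOn hinjOn] at htri
    exact htri
  have hconn' : ∀ u ∈ Sf, ∀ w ∈ Sf, Relation.ReflTransGen A u w := by
    intro u hu w hw
    rw [hmemS] at hu hw
    obtain ⟨t0, ht0f, ht0s, ht0c⟩ := hpure _ hu.2
    obtain ⟨t1, ht1f, ht1s, ht1c⟩ := hpure _ hw.2
    have hchain := hlinkconn v t0 t1 ht0f ht1f ht0c ht1c (ht0s (by simp)) (ht1s (by simp))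
    have step : ∀ (t : Finset V), t ∈ K.faces → v ∈ t →
        ∀ p ∈ t, ∀ q ∈ t, p ≠ v → q ≠ v → p = q ∨ A p q := by
      intro t htf hvt p hp q hq hpv hqv
      by_cases hpq : p = q
      · exact Or.inl hpq
      · exact Or.inr ⟨hpq, ⟨hpv, sub_pair_mem K htf hvt hp⟩,
          ⟨hqv, sub_pair_mem K htf hvt hq⟩, sub_pair_mem K htf hp hq⟩
    have hbase : ∀ p ∈ t0, p ≠ v → Relation.ReflTransGen A u p := by
      intro p hp hpv
      rcases step t0 ht0f (ht0s (by simp)) u (ht0s (by simp)) p hp hu.1 hpv with h | h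
      · exact h ▸ Relation.ReflTransGen.refl
      · exact Relation.ReflTransGen.single h
    have hmain : ∀ (tt : Finset V),
        Relation.ReflTransGen
          (fun a b => a ∈ K.faces ∧ b ∈ K.faces ∧ a.card = 3 ∧ b.card = 3 ∧
            v ∈ a ∧ v ∈ b ∧ (a ∩ b).card = 2) t0 tt →
        ∀ p ∈ tt, p ≠ v → Relation.ReflTransGen A u p := by
      intro tt hchain2
      induction hchain2 with
      | refl => exact hbase
      | tail hp hR ih =>
        obtain ⟨haf, hbf, hac, hbc, hva, hvb, hab⟩ := hR
        intro p hp' hpv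
        obtain ⟨x, y, hxy, hxyeq⟩ := Finset.card_eq_two.1 hab
        have hvxy : v ∈ ({x, y} : Finset V) := by
          rw [← hxyeq]; exact Finset.mem_inter.2 ⟨hva, hvb⟩
        simp only [Finset.mem_insert, Finset.mem_singleton] at hvxy
        obtain ⟨z, hzmem, hzv⟩ : ∃ z, z ∈ ({x, y} : Finset V) ∧ z ≠ v := by
          rcases hvxy with rfl | rfl
          · exact ⟨y, by simp, Ne.symm hxy⟩
          · exact ⟨x, by simp, hxy⟩
        have hzab : z ∈ _ := hxyeq ▸ hzmem
        have hza : z ∈ _ := (Finset.mem_inter.1 hzab).1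
        have hzb : z ∈ _ := (Finset.mem_inter.1 hzab).2
        have hpath := ih z hza hzv
        rcases step _ hbf hvb z hzb p hp' hzv hpv with h | h
        · exact h ▸ hpath
        · exact hpath.tail h
    exact hmain t1 hchain w (ht1s (by simp)) hw.1
  have hne : Sf.Nonempty := by
    obtain ⟨t, htf, hts, htc⟩ := hpure {v} (hvert v)
    have hvt : v ∈ t := hts (by simp)
    obtain ⟨u, hut, huv⟩ := Finset.exists_mem_ne (by rw [htc]; omega) v
    exact ⟨u, (hmemS u).2 ⟨huv, sub_pair_mem K htf hvt hut⟩⟩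
  obtain ⟨f, hk3, hinj, hrange, hedges, hchord⟩ :=
    cycle_of_two_regular Sf hne A hsym hmem h2' hconn'
  have hfS : ∀ a : ZMod Sf.card, f a ≠ v ∧ ({v, f a} : Finset V) ∈ K.faces := by
    intro a
    have h : f a ∈ (↑Sf : Set V) := hrange ▸ Set.mem_range_self a
    rw [Finset.mem_coe, hmemS] at h; exact h
  rw [VertexSurrounded, hdeg]
  refine ⟨f, ⟨hk3, hinj, ?_, ?_, ?_⟩, ?_⟩
  · intro i
    exact (hedges i).2.2.2
  · intro i j hij he
    refine hchord i j hij ⟨fun h => hij (hinj h), ?_, ?_, he⟩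
    · exact ⟨(hfS i).1, (hfS i).2⟩
    · exact ⟨(hfS j).1, (hfS j).2⟩
  · intro i j l hij hjl hil htri3
    have hvne : ∀ a : ZMod Sf.card, v ≠ f a := fun a => Ne.symm (hfS a).1
    have hfij : f i ≠ f j := fun h => hij (hinj h)
    have hfjl : f j ≠ f l := fun h => hjl (hinj h)
    have hfil : f i ≠ f l := fun h => hil (hinj h)
    have h4 : ({v, f i, f j, f l} : Finset V) ∈ K.faces := by
      apply hF
      · exact ⟨v, by simp⟩
      · intro u hu
        simp only [Finset.mem_insert, Finset.mem_singleton] at hu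
        rcases hu with rfl | rfl | rfl | rfl
        · exact sub_single_mem K (hfS i).2 (by simp)
        · exact sub_single_mem K (hfS i).2 (by simp)
        · exact sub_single_mem K (hfS j).2 (by simp)
        · exact sub_single_mem K (hfS l).2 (by simp)
      · intro a ha b hb hab
        simp only [Finset.mem_insert, Finset.mem_singleton] at ha hb
        rcases ha with rfl | rfl | rfl | rfl <;> rcases hb with rfl | rfl | rfl | rfl <;>
          first
          | exact absurd rfl hab
          | exact (hfS i).2
          | exact (hfS j).2
          | exact (hfS l).2
          | (rw [Finset.pair_comm]
             first | exact (hfS i).2 | exact (hfS j).2 | exact (hfS l).2)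
          | exact sub_pair_mem K htri3 (by simp) (by simp)
          | (rw [Finset.pair_comm]; exact sub_pair_mem K htri3 (by simp) (by simp))
    have hc4 : ({v, f i, f j, f l} : Finset V).card = 4 := by
      rw [Finset.card_insert_of_notMem (by simp [hvne i, hvne j, hvne l]),
        Finset.card_insert_of_notMem (by simp [hfij, hfil]),
        Finset.card_pair hfjl]
    have := hdim _ h4
    omega
  · rw [hrange, hSfdef, Set.Finite.coe_toFinset]

theorem vdeg_ge_five (K : SC V) (hS : IsSphere2 K) (hP : IsPogorelov K) (v : V) :
    5 ≤ K.vdeg v := by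
  obtain ⟨hF, hB4⟩ := hP
  have hvs := vertexSurrounded_of_flag K hS hF v
  by_contra hlt
  push_neg at hlt
  simp only [VertexSurrounded] at hvs
  have hk3 : 3 ≤ K.vdeg v := hvs.choose_spec.1.1
  have hk : K.vdeg v = 3 ∨ K.vdeg v = 4 := by omega
  rcases hk with hk | hk
  · rw [hk] at hvs
    obtain ⟨f, hbelt, hrange⟩ := hvs
    obtain ⟨_, hinj, hedges, hchord, htri⟩ := hbelt
    have hfS : ∀ a : ZMod 3, f a ≠ v ∧ ({v, f a} : Finset V) ∈ K.faces := by
      intro a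
      have h : f a ∈ Set.range f := Set.mem_range_self a
      rw [hrange] at h; exact h
    have h01 : ({f 0, f 1} : Finset V) ∈ K.faces := hedges 0
    have h12 : ({f 1, f 2} : Finset V) ∈ K.faces := hedges 1
    have h20 : ({f 2, f 0} : Finset V) ∈ K.faces := hedges 2
    have hne01 : f 0 ≠ f 1 := fun h => (by decide : (0 : ZMod 3) ≠ 1) (hinj h)
    have hne12 : f 1 ≠ f 2 := fun h => (by decide : (1 : ZMod 3) ≠ 2) (hinj h)
    have hne02 : f 0 ≠ f 2 := fun h => (by decide : (0 : ZMod 3) ≠ 2) (hinj h)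
    exact htri 0 1 2 (by decide) (by decide) (by decide)
      (flag_triangle K hF hne01 hne02 hne12 h01 (by rwa [Finset.pair_comm]) h12)
  · rw [hk] at hvs
    obtain ⟨f, hbelt, _⟩ := hvs
    exact hB4 ⟨f, hbelt⟩

theorem exists_vdeg_le_five (K : SC V) (hS : IsSphere2 K) : ∃ v : V, K.vdeg v ≤ 5 := by
  classical
  obtain ⟨hvert, hdim, hpure, hedge2, hlinkconn, hconn0, heuler⟩ := hS
  by_contra hcon
  push_neg at hcon
  set Edges : Finset (Finset V) := Finset.univ.filter (fun s => s ∈ K.faces ∧ s.card = 2)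
    with hEdef
  set Tris : Finset (Finset V) := Finset.univ.filter (fun s => s ∈ K.faces ∧ s.card = 3)
    with hTdef
  set Verts : Finset (Finset V) := Finset.univ.filter (fun s => s ∈ K.faces ∧ s.card = 1)
    with hVdef
  have hVcard : Verts.card = Fintype.card V := by
    have himg : Verts = Finset.univ.image (fun v : V => ({v} : Finset V)) := by
      ext s
      simp only [hVdef, Finset.mem_filter, Finset.mem_univ, true_and, Finset.mem_image]
      constructor
      · rintro ⟨hf, hc⟩
        obtain ⟨a, rfl⟩ := Finset.card_eq_one.1 hc
        exact ⟨a, rfl⟩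
      · rintro ⟨a, _, rfl⟩
        exact ⟨hvert a, Finset.card_singleton a⟩
    rw [himg, Finset.card_image_of_injective _ (fun a b h => by
      simpa using h), Finset.card_univ]
  have h3T2E : 3 * Tris.card = 2 * Edges.card := by
    have hlhs : ∀ t ∈ Tris, (Edges.filter (· ⊆ t)).card = 3 := by
      intro t ht
      simp only [hTdef, Finset.mem_filter, Finset.mem_univ, true_and] at ht
      obtain ⟨htf, htc⟩ := ht
      have : Edges.filter (· ⊆ t) = t.powersetCard 2 := by
        ext e
        simp only [Finset.mem_filter, hEdef, Finset.mem_univ, true_and,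
          Finset.mem_powersetCard]
        constructor
        · rintro ⟨⟨hef, hec⟩, hsub⟩; exact ⟨hsub, hec⟩
        · rintro ⟨hsub, hec⟩
          exact ⟨⟨K.down_closed t htf e hsub, hec⟩, hsub⟩
      rw [this, Finset.card_powersetCard, htc]
      rfl
    have hrhs : ∀ e ∈ Edges, (Tris.filter (e ⊆ ·)).card = 2 := by
      intro e he
      simp only [hEdef, Finset.mem_filter, Finset.mem_univ, true_and] at he
      have hn := hedge2 e he.1 he.2
      have hset : {t | t ∈ K.faces ∧ t.card = 3 ∧ e ⊆ t} =
          ↑(Tris.filter (e ⊆ ·)) := by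
        ext t
        simp only [Finset.coe_filter, hTdef, Finset.mem_filter, Finset.mem_univ,
          true_and, Set.mem_setOf_eq]
        tauto
      rw [hset, Set.ncard_coe_finset] at hn
      exact hn
    have hdc : ∑ t ∈ Tris, (Edges.filter (· ⊆ t)).card
        = ∑ e ∈ Edges, (Tris.filter (e ⊆ ·)).card := by
      simp only [Finset.card_filter]
      exact Finset.sum_comm
    rw [Finset.sum_congr rfl hlhs, Finset.sum_congr rfl hrhs,
      Finset.sum_const, Finset.sum_const, smul_eq_mul, smul_eq_mul,
      mul_comm Tris.card 3, mul_comm Edges.card 2] at hdc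
    exact hdc
  have hdegE : ∀ v : V, K.vdeg v = (Edges.filter (fun e => v ∈ e)).card := by
    intro v
    rw [SC.vdeg, ← Set.ncard_coe_finset]
    have hset : (↑(Edges.filter (fun e => v ∈ e)) : Set (Finset V)) =
        (fun u => ({v, u} : Finset V)) '' {u | u ≠ v ∧ ({v, u} : Finset V) ∈ K.faces} := by
      ext e
      simp only [Finset.coe_filter, hEdef, Finset.mem_filter, Finset.mem_univ, true_and,
        Set.mem_setOf_eq, Set.mem_image]
      constructor
      · rintro ⟨⟨hef, hec⟩, hve⟩
        obtain ⟨a, b, hab, rfl⟩ := Finset.card_eq_two.1 hec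
        simp only [Finset.mem_insert, Finset.mem_singleton] at hve
        rcases hve with rfl | rfl
        · exact ⟨b, ⟨hab.symm, hef⟩, rfl⟩
        · exact ⟨a, ⟨hab, by rwa [Finset.pair_comm]⟩, by rw [Finset.pair_comm]⟩
      · rintro ⟨u, ⟨huv, hu⟩, rfl⟩
        exact ⟨⟨hu, Finset.card_pair (Ne.symm huv)⟩, by simp⟩
    rw [hset, Set.ncard_image_of_injOn]
    rintro a ⟨hav, _⟩ b ⟨hbv, _⟩ hab
    have hab' : ({v, a} : Finset V) = {v, b} := hab
    have hmm : a ∈ ({v, b} : Finset V) := by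
      have h1 : a ∈ ({v, a} : Finset V) := by simp
      rwa [hab'] at h1
    simp only [Finset.mem_insert, Finset.mem_singleton] at hmm
    rcases hmm with h | h
    · exact absurd h hav
    · exact h
  have hsumdeg : ∑ v : V, K.vdeg v = 2 * Edges.card := by
    calc ∑ v : V, K.vdeg v = ∑ v : V, (Edges.filter (fun e => v ∈ e)).card := by
          exact Finset.sum_congr rfl (fun v _ => hdegE v)
    _ = ∑ e ∈ Edges, (Finset.univ.filter (fun v : V => v ∈ e)).card := by
          simp only [Finset.card_filter]
          exact Finset.sum_comm
    _ = ∑ e ∈ Edges, e.card := by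
          apply Finset.sum_congr rfl
          intro e _
          congr 1
          ext x
          simp
    _ = ∑ e ∈ Edges, 2 := by
          apply Finset.sum_congr rfl
          intro e he
          simp only [hEdef, Finset.mem_filter, Finset.mem_univ, true_and] at he
          exact he.2
    _ = 2 * Edges.card := by rw [Finset.sum_const, smul_eq_mul, mul_comm]
  have heuler' : (Verts.card : ℤ) - (Edges.card : ℤ) + (Tris.card : ℤ) = 2 := by
    have e1 : {s | s ∈ K.faces ∧ s.card = 1}.ncard = Verts.card := by
      rw [← Set.ncard_coe_finset]; congr 1; ext s; simp [hVdef]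
    have e2 : {s | s ∈ K.faces ∧ s.card = 2}.ncard = Edges.card := by
      rw [← Set.ncard_coe_finset]; congr 1; ext s; simp [hEdef]
    have e3 : {s | s ∈ K.faces ∧ s.card = 3}.ncard = Tris.card := by
      rw [← Set.ncard_coe_finset]; congr 1; ext s; simp [hTdef]
    rw [e1, e2, e3] at heuler
    exact heuler
  have hlow : 6 * Fintype.card V ≤ ∑ v : V, K.vdeg v := by
    calc 6 * Fintype.card V = ∑ _v : V, 6 := by
          rw [Finset.sum_const, smul_eq_mul, mul_comm, Finset.card_univ]
    _ ≤ ∑ v : V, K.vdeg v := Finset.sum_le_sum (fun v _ => hcon v)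
  rw [hsumdeg, ← hVcard] at hlow
  omega


lemma cast_sub_eq_neg (M c : ℕ) (h : c ≤ M) : ((M - c : ℕ) : ZMod M) = -(c : ℕ) := by
  have h1 : ((M - c : ℕ) : ZMod M) = (M : ℕ) - (c : ℕ) := by
    push_cast [h]; ring
  rw [h1, ZMod.natCast_self, zero_sub]

lemma belt_rotate (K : SC V) {k : ℕ} {f : ZMod k → V} (h : IsBelt K k f) (c : ZMod k) :
    IsBelt K k (fun j => f (j + c)) ∧
      Set.range (fun j => f (j + c)) = Set.range f := by
  obtain ⟨hk, hinj, he, hc, ht⟩ := h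
  refine ⟨⟨hk, ?_, ?_, ?_, ?_⟩, ?_⟩
  · intro i j hij
    have := hinj hij
    exact add_right_cancel this
  · intro i
    have := he (i + c)
    have harr : i + 1 + c = i + c + 1 := by ring
    show ({f (i + c), f (i + 1 + c)} : Finset V) ∈ K.faces
    rw [harr]
    exact this
  · intro i j hij hface
    have h2 : i + c ≠ j + c := fun hh => hij (add_right_cancel hh)
    rcases hc (i + c) (j + c) h2 hface with h | h
    · left
      have : j + c = i + 1 + c := by rw [h]; ring
      exact add_right_cancel this
    · right
      have : i + c = j + 1 + c := by rw [h]; ring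
      exact add_right_cancel this
  · intro i j m hij hjm him
    exact ht (i + c) (j + c) (m + c) (fun hh => hij (add_right_cancel hh))
      (fun hh => hjm (add_right_cancel hh)) (fun hh => him (add_right_cancel hh))
  · ext x
    constructor
    · rintro ⟨i, rfl⟩; exact ⟨i + c, rfl⟩
    · rintro ⟨i, rfl⟩; exact ⟨i - c, by simp⟩

lemma belt_reflect (K : SC V) {k : ℕ} {f : ZMod k → V} (h : IsBelt K k f) :
    IsBelt K k (fun j => f (-j)) ∧
      Set.range (fun j => f (-j)) = Set.range f := by
  obtain ⟨hk, hinj, he, hc, ht⟩ := h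
  refine ⟨⟨hk, ?_, ?_, ?_, ?_⟩, ?_⟩
  · intro i j hij
    have := hinj hij
    exact neg_injective this
  · intro i
    have := he (-(i + 1))
    have harr : -(i + 1) + 1 = -i := by ring
    rw [harr] at this
    rw [Finset.pair_comm] at this
    exact this
  · intro i j hij hface
    have h2 : -i ≠ -j := fun hh => hij (neg_injective hh)
    rcases hc (-i) (-j) h2 hface with h | h
    · right
      have : i = j + 1 := by
        have := congrArg Neg.neg h
        simp only [neg_neg] at this
        rw [this]; ring
      exact this
    · left
      have : j = i + 1 := by
        have := congrArg Neg.neg h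
        simp only [neg_neg] at this
        rw [this]; ring
      exact this
  · intro i j m hij hjm him
    exact ht (-i) (-j) (-m) (fun hh => hij (neg_injective hh))
      (fun hh => hjm (neg_injective hh)) (fun hh => him (neg_injective hh))
  · ext x
    constructor
    · rintro ⟨i, rfl⟩; exact ⟨-i, rfl⟩
    · rintro ⟨i, rfl⟩; exact ⟨-i, by simp⟩

/-- Orient the link cycle of `v` so that it starts at `a` and ends at `b`,
for an adjacent pair `a b` in the link of `v`. -/
lemma orient_link (K : SC V) (hS : IsSphere2 K) (hF : IsFlag K) (v a b : V)
    (hav : a ≠ v) (hbv : b ≠ v) (hab : a ≠ b)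
    (ha : ({v, a} : Finset V) ∈ K.faces) (hb : ({v, b} : Finset V) ∈ K.faces)
    (he : ({a, b} : Finset V) ∈ K.faces) :
    ∃ h : ZMod (K.vdeg v) → V, IsBelt K (K.vdeg v) h ∧
      Set.range h = {u | u ≠ v ∧ ({v, u} : Finset V) ∈ K.faces} ∧
      h 0 = a ∧ h (-1) = b := by
  obtain ⟨f, hbelt, hrange⟩ := vertexSurrounded_of_flag K hS hF v
  have hamem : a ∈ Set.range f := by rw [hrange]; exact ⟨hav, ha⟩
  obtain ⟨i0, hi0⟩ := hamem
  obtain ⟨hbelt1, hrange1⟩ := belt_rotate K hbelt i0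
  set g : ZMod (K.vdeg v) → V := fun j => f (j + i0) with hgdef
  have hg0 : g 0 = a := by rw [hgdef]; simp [hi0]
  have hbmem : b ∈ Set.range g := by rw [hrange1, hrange]; exact ⟨hbv, hb⟩
  obtain ⟨j0, hj0⟩ := hbmem
  have hj00 : j0 ≠ 0 := by
    intro hh; rw [hh, hg0] at hj0; exact hab hj0
  have hchord := hbelt1.2.2.2.1 0 j0 (Ne.symm hj00) (by rw [hg0, hj0]; exact he)
  rcases hchord with h | h
  · -- j0 = 1 : reflect
    obtain ⟨hbelt2, hrange2⟩ := belt_reflect K hbelt1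
    refine ⟨fun j => g (-j), hbelt2, by rw [hrange2, hrange1, hrange], ?_, ?_⟩
    · simp [hg0]
    · simp only [neg_neg]
      rw [← hj0, h]; norm_num
  · -- 0 = j0 + 1, i.e. j0 = -1
    refine ⟨g, hbelt1, by rw [hrange1, hrange], hg0, ?_⟩
    rw [← hj0]
    congr 1
    linear_combination h
  
lemma four_belt_absurd (K : SC V) (hB4 : ¬ HasBelt K 4) {x0 x1 x2 x3 : V}
    (d01 : x0 ≠ x1) (d02' : x0 ≠ x2) (d03 : x0 ≠ x3) (d12 : x1 ≠ x2)
    (d13' : x1 ≠ x3) (d23 : x2 ≠ x3)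
    (e01 : ({x0, x1} : Finset V) ∈ K.faces) (e12 : ({x1, x2} : Finset V) ∈ K.faces)
    (e23 : ({x2, x3} : Finset V) ∈ K.faces) (e30 : ({x3, x0} : Finset V) ∈ K.faces)
    (d02 : ({x0, x2} : Finset V) ∉ K.faces) (d13 : ({x1, x3} : Finset V) ∉ K.faces) :
    False := by
  apply hB4
  refine ⟨![x0, x1, x2, x3], by norm_num, ?_, ?_, ?_, ?_⟩
  · intro i j hij
    fin_cases i <;> fin_cases j <;>
      simp_all [d01, d02', d03, d12, d13', d23, d01.symm, d02'.symm, d03.symm,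
        d12.symm, d13'.symm, d23.symm] <;> rfl
  · intro i
    fin_cases i
    · exact e01
    · exact e12
    · exact e23
    · exact e30
  · intro i j hij hface
    have hidx : ∀ i j : ZMod 4, i ≠ j → (j = i+1 ∨ i = j+1) ∨
        ((i = 0 ∧ j = 2) ∨ (i = 2 ∧ j = 0) ∨ (i = 1 ∧ j = 3) ∨ (i = 3 ∧ j = 1)) := by
      decide
    rcases hidx i j hij with h | h
    · exact h
    · exfalso
      rcases h with ⟨rfl, rfl⟩ | ⟨rfl, rfl⟩ | ⟨rfl, rfl⟩ | ⟨rfl, rfl⟩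
      · exact d02 hface
      · exact d02 (by rwa [Finset.pair_comm] at hface)
      · exact d13 hface
      · exact d13 (by rwa [Finset.pair_comm] at hface)
  · intro i j m hij hjm him hmem
    have hidx3 : ∀ i j m : ZMod 4, i ≠ j → j ≠ m → i ≠ m →
        ((i = 0 ∨ j = 0 ∨ m = 0) ∧ (i = 2 ∨ j = 2 ∨ m = 2)) ∨
        ((i = 1 ∨ j = 1 ∨ m = 1) ∧ (i = 3 ∨ j = 3 ∨ m = 3)) := by decide
    have hx : ∀ c : ZMod 4, (i = c ∨ j = c ∨ m = c) →
        ![x0,x1,x2,x3] c ∈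
          ({![x0,x1,x2,x3] i, ![x0,x1,x2,x3] j, ![x0,x1,x2,x3] m} : Finset V) := by
      rintro c (rfl | rfl | rfl) <;> simp
    rcases hidx3 i j m hij hjm him with ⟨h0, h2⟩ | ⟨h1, h3⟩
    · exact d02 (sub_pair_mem K hmem (hx 0 h0) (hx 2 h2))
    · exact d13 (sub_pair_mem K hmem (hx 1 h1) (hx 3 h3))


lemma zmod_cast_ne_zero (M c : ℕ) (hc : 0 < c) (hM : c < M)
    (h : ((c : ℕ) : ZMod M) = 0) : False := by
  have := Nat.le_of_dvd hc ((ZMod.natCast_eq_zero_iff c M).1 h)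
  omega

end Helpers
/-- For any Pogorelov polytope `P` (encoded by its dual simplicial 2-sphere `K`)
there exist `n, l ≥ 5` and pairwise distinct facets `F 1, …, F (l+n-1)` such that
`F 1, F 2, F 3` pairwise intersect in a common vertex (`{F 1, F 2, F 3}` is a
2-simplex of `K`), `|F 1| = 5`, `|F 2| = l`, `|F 3| = n`, and the remaining
`l + n - 4` facets, in the order `(F 4, F 8, …, F (l+3), F 5, F (l+4), …,
F (l+n-1), F 6, F 7)`, form a belt consisting exactly of the facets adjacent to
`F 1 ∪ F 2 ∪ F 3` and surrounding this triple. -/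
theorem stmt11 {V : Type} [DecidableEq V] [Fintype V] (K : SC V) (hS : IsSphere2 K)
    (hP : IsPogorelov K) :
    ∃ l n : ℕ, 5 ≤ l ∧ 5 ≤ n ∧
      ∃ F : ℕ → V,
        Set.InjOn F (Set.Icc 1 (l + n - 1)) ∧
        (∀ i ∈ Set.Icc 1 (l + n - 1), ({F i} : Finset V) ∈ K.faces) ∧
        ({F 1, F 2, F 3} : Finset V) ∈ K.faces ∧
        K.vdeg (F 1) = 5 ∧ K.vdeg (F 2) = l ∧ K.vdeg (F 3) = n ∧
        ∃ g : ZMod (l + n - 4) → V,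
          IsBelt K (l + n - 4) g ∧
          Set.range g = {w | w ≠ F 1 ∧ w ≠ F 2 ∧ w ≠ F 3 ∧
            (({w, F 1} : Finset V) ∈ K.faces ∨ ({w, F 2} : Finset V) ∈ K.faces ∨
              ({w, F 3} : Finset V) ∈ K.faces)} ∧
          ∀ p : ZMod (l + n - 4), g p = F (beltLabel l n p.val) := by
  classical
  have hF := hP.1
  have hB4 := hP.2
  obtain ⟨v1, hv1le⟩ := exists_vdeg_le_five K hS
  have hdeg1 : K.vdeg v1 = 5 := le_antisymm hv1le (vdeg_ge_five K hS hP v1)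
  -- initial link of v1, to choose the adjacent pair v2 v3
  have hvs0 := vertexSurrounded_of_flag K hS hF v1
  simp only [VertexSurrounded] at hvs0
  rw [hdeg1] at hvs0
  obtain ⟨h0, hb0, hr0⟩ := hvs0
  have hmem0 : ∀ i, h0 i ≠ v1 ∧ ({v1, h0 i} : Finset V) ∈ K.faces := by
    intro i
    have : h0 i ∈ Set.range h0 := Set.mem_range_self i
    rwa [hr0] at this
  set v2 : V := h0 0 with hv2def
  set v3 : V := h0 1 with hv3def
  have hv23 : ({v2, v3} : Finset V) ∈ K.faces := by
    have := hb0.2.2.1 0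
    rwa [zero_add] at this
  have hne23 : v2 ≠ v3 := fun h => (by decide : (0 : ZMod 5) ≠ 1) (hb0.2.1 h)
  have hne21 : v2 ≠ v1 := (hmem0 0).1
  have hne31 : v3 ≠ v1 := (hmem0 1).1
  have hv12 : ({v1, v2} : Finset V) ∈ K.faces := (hmem0 0).2
  have hv13 : ({v1, v3} : Finset V) ∈ K.faces := (hmem0 1).2
  have hv21 : ({v2, v1} : Finset V) ∈ K.faces := by rwa [Finset.pair_comm] at hv12
  have hv31 : ({v3, v1} : Finset V) ∈ K.faces := by rwa [Finset.pair_comm] at hv13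
  have hv32 : ({v3, v2} : Finset V) ∈ K.faces := by rwa [Finset.pair_comm] at hv23
  have htriple : ({v1, v2, v3} : Finset V) ∈ K.faces :=
    flag_triangle K hF (Ne.symm hne21) (Ne.symm hne31) hne23 hv12 hv13 hv23
  -- oriented link cycles
  have ho1 := orient_link K hS hF v1 v2 v3 hne21 hne31 hne23 hv12 hv13 hv23
  rw [hdeg1] at ho1
  obtain ⟨h1, hb1, hr1, h1z, h1l⟩ := ho1
  have h14 : h1 4 = v3 := by
    rw [show (4 : ZMod 5) = -1 by decide]; exact h1l
  set l := K.vdeg v2 with hldef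
  set n := K.vdeg v3 with hndef
  have hl5 : 5 ≤ l := vdeg_ge_five K hS hP v2
  have hn5 : 5 ≤ n := vdeg_ge_five K hS hP v3
  haveI : NeZero l := ⟨by omega⟩
  haveI : NeZero n := ⟨by omega⟩
  haveI : NeZero (l + n - 4) := ⟨by omega⟩
  obtain ⟨h2, hb2, hr2, h2z, h2l⟩ :=
    orient_link K hS hF v2 v1 v3 (Ne.symm hne21) (Ne.symm hne23) (Ne.symm hne31)
      hv21 hv23 hv13
  obtain ⟨h3, hb3, hr3, h3z, h3l⟩ :=
    orient_link K hS hF v3 v2 v1 hne23 (Ne.symm hne31) hne21 hv32 hv31 hv21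
  obtain ⟨_, inj1, e1, c1, t1⟩ := hb1
  obtain ⟨_, inj2, e2, c2, t2⟩ := hb2
  obtain ⟨_, inj3, e3, c3, t3⟩ := hb3
  have mem1 : ∀ i, h1 i ≠ v1 ∧ ({v1, h1 i} : Finset V) ∈ K.faces := by
    intro i
    have : h1 i ∈ Set.range h1 := Set.mem_range_self i
    rwa [hr1] at this
  have mem2 : ∀ i, h2 i ≠ v2 ∧ ({v2, h2 i} : Finset V) ∈ K.faces := by
    intro i
    have : h2 i ∈ Set.range h2 := Set.mem_range_self i
    rwa [hr2] at this
  have mem3 : ∀ i, h3 i ≠ v3 ∧ ({v3, h3 i} : Finset V) ∈ K.faces := by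
    intro i
    have : h3 i ∈ Set.range h3 := Set.mem_range_self i
    rwa [hr3] at this
  -- the three corner identities
  have hc12 : h1 1 = h2 1 := by
    have had : ({v2, h1 1} : Finset V) ∈ K.faces := by
      have := e1 0
      rwa [zero_add, h1z] at this
    have hne : h1 1 ≠ v2 := by
      rw [← h1z]
      exact fun h => (by decide : (1 : ZMod 5) ≠ 0) (inj1 h)
    have hmem : h1 1 ∈ Set.range h2 := by
      rw [hr2]; exact ⟨hne, had⟩
    obtain ⟨j, hj⟩ := hmem
    have hj0 : j ≠ 0 := by
      intro h; rw [h, h2z] at hj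
      exact (mem1 1).1 hj.symm
    have hadj : ({h2 0, h2 j} : Finset V) ∈ K.faces := by
      rw [h2z, hj]; exact (mem1 1).2
    rcases c2 0 j (Ne.symm hj0) hadj with h | h
    · rw [← hj]; congr 1; simpa using h
    · exfalso
      have hjm : j = -1 := by linear_combination -h
      rw [hjm, h2l] at hj
      have h41 : h1 4 = h1 1 := by rw [h14, hj]
      exact (by decide : (4 : ZMod 5) ≠ 1) (inj1 h41)
  have hc23 : h2 (-2) = h3 1 := by
    have had : ({v3, h2 (-2)} : Finset V) ∈ K.faces := by
      have := e2 (-2)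
      rw [show (-2 + 1 : ZMod l) = -1 by ring, h2l] at this
      rwa [Finset.pair_comm] at this
    have hne : h2 (-2) ≠ v3 := by
      rw [← h2l]
      intro h
      have heq := inj2 h
      refine zmod_cast_ne_zero l 1 (by omega) (by omega) ?_
      push_cast
      linear_combination -heq
    have hmem : h2 (-2) ∈ Set.range h3 := by
      rw [hr3]; exact ⟨hne, had⟩
    obtain ⟨j, hj⟩ := hmem
    have hj0 : j ≠ 0 := by
      intro h; rw [h, h3z] at hj
      exact (mem2 (-2)).1 hj.symm
    have hadj : ({h3 0, h3 j} : Finset V) ∈ K.faces := by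
      rw [h3z, hj]; exact (mem2 (-2)).2
    rcases c3 0 j (Ne.symm hj0) hadj with h | h
    · rw [← hj]; congr 1; simpa using h
    · exfalso
      have hjm : j = -1 := by linear_combination -h
      rw [hjm, h3l] at hj
      have : h2 (-2) = h2 0 := by rw [← hj, h2z]
      have heq := inj2 this
      refine zmod_cast_ne_zero l 2 (by omega) (by omega) ?_
      push_cast
      linear_combination -heq
  have hc31 : h3 (-2) = h1 3 := by
    have had : ({v1, h3 (-2)} : Finset V) ∈ K.faces := by
      have := e3 (-2)
      rw [show (-2 + 1 : ZMod n) = -1 by ring, h3l] at this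
      rwa [Finset.pair_comm] at this
    have hne : h3 (-2) ≠ v1 := by
      rw [← h3l]
      intro h
      have heq := inj3 h
      refine zmod_cast_ne_zero n 1 (by omega) (by omega) ?_
      push_cast
      linear_combination -heq
    have hmem : h3 (-2) ∈ Set.range h1 := by
      rw [hr1]; exact ⟨hne, had⟩
    obtain ⟨j, hj⟩ := hmem
    have hj4 : j ≠ 4 := by
      intro h; rw [h, h14] at hj
      exact (mem3 (-2)).1 hj.symm
    have hadj : ({h1 4, h1 j} : Finset V) ∈ K.faces := by
      rw [h14, hj]; exact (mem3 (-2)).2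
    rcases c1 4 j (Ne.symm hj4) hadj with h | h
    · exfalso
      have hjm : j = 0 := by rw [h]; decide
      rw [hjm, h1z] at hj
      have : h3 (-2) = h3 0 := by rw [← hj, h3z]
      have heq := inj3 this
      refine zmod_cast_ne_zero n 2 (by omega) (by omega) ?_
      push_cast
      linear_combination -heq
    · have hjm : j = 3 := by linear_combination -h
      rw [← hj, hjm]
  -- casts
  have hneg1l : ((l - 1 : ℕ) : ZMod l) = -1 := by
    rw [cast_sub_eq_neg l 1 (by omega)]; norm_num
  have hneg2l : ((l - 2 : ℕ) : ZMod l) = -2 := by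
    rw [cast_sub_eq_neg l 2 (by omega)]; norm_num
  have hneg1n : ((n - 1 : ℕ) : ZMod n) = -1 := by
    rw [cast_sub_eq_neg n 1 (by omega)]; norm_num
  have hneg2n : ((n - 2 : ℕ) : ZMod n) = -2 := by
    rw [cast_sub_eq_neg n 2 (by omega)]; norm_num
  -- natural-number versions of injectivity
  have hinj2' : ∀ a b : ℕ, a < l → b < l → h2 ((a : ZMod l)) = h2 ((b : ZMod l)) → a = b := by
    intro a b ha hb h
    have := inj2 h
    have := congrArg ZMod.val this
    rwa [ZMod.val_cast_of_lt ha, ZMod.val_cast_of_lt hb] at this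
  have hinj3' : ∀ a b : ℕ, a < n → b < n → h3 ((a : ZMod n)) = h3 ((b : ZMod n)) → a = b := by
    intro a b ha hb h
    have := inj3 h
    have := congrArg ZMod.val this
    rwa [ZMod.val_cast_of_lt ha, ZMod.val_cast_of_lt hb] at this
  -- chord lemmas in ℕ form
  have chord2 : ∀ a b : ℕ, a < l → b < l → a ≠ b →
      ({h2 ((a : ZMod l)), h2 ((b : ZMod l))} : Finset V) ∈ K.faces →
      (b = a + 1 ∨ a = b + 1 ∨ (a = 0 ∧ b = l - 1) ∨ (b = 0 ∧ a = l - 1)) := by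
    intro a b ha hb hab hface
    have hne : (a : ZMod l) ≠ (b : ZMod l) := by
      intro h
      have := congrArg ZMod.val h
      rw [ZMod.val_cast_of_lt ha, ZMod.val_cast_of_lt hb] at this
      exact hab this
    rcases c2 _ _ hne hface with h | h
    · have hcast : ((b : ℕ) : ZMod l) = ((a + 1 : ℕ) : ZMod l) := by push_cast; exact h
      have hvv := congrArg ZMod.val hcast
      rw [ZMod.val_cast_of_lt hb, ZMod.val_natCast] at hvv
      rcases Nat.lt_or_ge (a + 1) l with h' | h'
      · rw [Nat.mod_eq_of_lt h'] at hvv; left; exact hvv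
      · have haa : a + 1 = l := by omega
        rw [haa, Nat.mod_self] at hvv
        right; right; right; exact ⟨hvv, by omega⟩
    · have hcast : ((a : ℕ) : ZMod l) = ((b + 1 : ℕ) : ZMod l) := by push_cast; exact h
      have hvv := congrArg ZMod.val hcast
      rw [ZMod.val_cast_of_lt ha, ZMod.val_natCast] at hvv
      rcases Nat.lt_or_ge (b + 1) l with h' | h'
      · rw [Nat.mod_eq_of_lt h'] at hvv; right; left; exact hvv
      · have hbb : b + 1 = l := by omega
        rw [hbb, Nat.mod_self] at hvv
        right; right; left; exact ⟨hvv, by omega⟩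
  have chord3 : ∀ a b : ℕ, a < n → b < n → a ≠ b →
      ({h3 ((a : ZMod n)), h3 ((b : ZMod n))} : Finset V) ∈ K.faces →
      (b = a + 1 ∨ a = b + 1 ∨ (a = 0 ∧ b = n - 1) ∨ (b = 0 ∧ a = n - 1)) := by
    intro a b ha hb hab hface
    have hne : (a : ZMod n) ≠ (b : ZMod n) := by
      intro h
      have := congrArg ZMod.val h
      rw [ZMod.val_cast_of_lt ha, ZMod.val_cast_of_lt hb] at this
      exact hab this
    rcases c3 _ _ hne hface with h | h
    · have hcast : ((b : ℕ) : ZMod n) = ((a + 1 : ℕ) : ZMod n) := by push_cast; exact h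
      have hvv := congrArg ZMod.val hcast
      rw [ZMod.val_cast_of_lt hb, ZMod.val_natCast] at hvv
      rcases Nat.lt_or_ge (a + 1) n with h' | h'
      · rw [Nat.mod_eq_of_lt h'] at hvv; left; exact hvv
      · have haa : a + 1 = n := by omega
        rw [haa, Nat.mod_self] at hvv
        right; right; right; exact ⟨hvv, by omega⟩
    · have hcast : ((a : ℕ) : ZMod n) = ((b + 1 : ℕ) : ZMod n) := by push_cast; exact h
      have hvv := congrArg ZMod.val hcast
      rw [ZMod.val_cast_of_lt ha, ZMod.val_natCast] at hvv
      rcases Nat.lt_or_ge (b + 1) n with h' | h'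
      · rw [Nat.mod_eq_of_lt h'] at hvv; right; left; exact hvv
      · have hbb : b + 1 = n := by omega
        rw [hbb, Nat.mod_self] at hvv
        right; right; left; exact ⟨hvv, by omega⟩
  -- non-adjacency facts
  have noadj_2_v1 : ∀ a : ℕ, 2 ≤ a → a ≤ l - 2 →
      ({v1, h2 ((a : ZMod l))} : Finset V) ∉ K.faces := by
    intro a ha1 ha2 hface
    have hmem : ({h2 ((0 : ℕ) : ZMod l), h2 ((a : ZMod l))} : Finset V) ∈ K.faces := by
      rw [Nat.cast_zero, h2z]; exact hface
    rcases chord2 0 a (by omega) (by omega) (by omega) hmem with h | h | h | h <;> omega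
  have noadj_2_v3 : ∀ a : ℕ, 1 ≤ a → a ≤ l - 3 →
      ({v3, h2 ((a : ZMod l))} : Finset V) ∉ K.faces := by
    intro a ha1 ha2 hface
    have hmem : ({h2 ((l - 1 : ℕ) : ZMod l), h2 ((a : ZMod l))} : Finset V) ∈ K.faces := by
      rw [hneg1l, h2l]; exact hface
    rcases chord2 (l-1) a (by omega) (by omega) (by omega) hmem with h | h | h | h <;> omega
  have noadj_3_v1 : ∀ b : ℕ, 1 ≤ b → b ≤ n - 3 →
      ({v1, h3 ((b : ZMod n))} : Finset V) ∉ K.faces := by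
    intro b hb1 hb2 hface
    have hmem : ({h3 ((n - 1 : ℕ) : ZMod n), h3 ((b : ZMod n))} : Finset V) ∈ K.faces := by
      rw [hneg1n, h3l]; exact hface
    rcases chord3 (n-1) b (by omega) (by omega) (by omega) hmem with h | h | h | h <;> omega
  have noadj_3_v2 : ∀ b : ℕ, 2 ≤ b → b ≤ n - 2 →
      ({v2, h3 ((b : ZMod n))} : Finset V) ∉ K.faces := by
    intro b hb1 hb2 hface
    have hmem : ({h3 ((0 : ℕ) : ZMod n), h3 ((b : ZMod n))} : Finset V) ∈ K.faces := by
      rw [Nat.cast_zero, h3z]; exact hface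
    rcases chord3 0 b (by omega) (by omega) (by omega) hmem with h | h | h | h <;> omega
  have noadj_m1_v3 : ({v3, h1 2} : Finset V) ∉ K.faces := by
    intro hface
    have hmem : ({h1 4, h1 2} : Finset V) ∈ K.faces := by rw [h14]; exact hface
    rcases c1 4 2 (by decide) hmem with h | h
    · exact (by decide : ¬ ((2 : ZMod 5) = 4 + 1)) h
    · exact (by decide : ¬ ((4 : ZMod 5) = 2 + 1)) h
  have noadj_m1_v2 : ({v2, h1 2} : Finset V) ∉ K.faces := by
    intro hface
    have hmem : ({h1 0, h1 2} : Finset V) ∈ K.faces := by rw [h1z]; exact hface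
    rcases c1 0 2 (by decide) hmem with h | h
    · exact (by decide : ¬ ((2 : ZMod 5) = 0 + 1)) h
    · exact (by decide : ¬ ((0 : ZMod 5) = 2 + 1)) h
  have noadj_c12_v3 : ({v3, h1 1} : Finset V) ∉ K.faces := by
    intro hface
    have hmem : ({h1 4, h1 1} : Finset V) ∈ K.faces := by rw [h14]; exact hface
    rcases c1 4 1 (by decide) hmem with h | h
    · exact (by decide : ¬ ((1 : ZMod 5) = 4 + 1)) h
    · exact (by decide : ¬ ((4 : ZMod 5) = 1 + 1)) h
  have noadj_c31_v2 : ({v2, h1 3} : Finset V) ∉ K.faces := by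
    intro hface
    have hmem : ({h1 0, h1 3} : Finset V) ∈ K.faces := by rw [h1z]; exact hface
    rcases c1 0 3 (by decide) hmem with h | h
    · exact (by decide : ¬ ((3 : ZMod 5) = 0 + 1)) h
    · exact (by decide : ¬ ((0 : ZMod 5) = 3 + 1)) h
  -- the facet numbering
  set F : ℕ → V := fun p =>
    if p = 1 then v1 else if p = 2 then v2 else if p = 3 then v3
    else if p = 4 then h1 1 else if p = 5 then h2 (-2) else if p = 6 then h1 3
    else if p = 7 then h1 2 else if p ≤ l + 3 then h2 ((p - 6 : ℕ) : ZMod l)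
    else h3 ((p - l - 2 : ℕ) : ZMod n) with hFdef
  have hF1 : F 1 = v1 := by simp [hFdef]
  have hF2 : F 2 = v2 := by simp [hFdef]
  have hF3 : F 3 = v3 := by simp [hFdef]
  have hF4 : F 4 = h1 1 := by simp [hFdef]
  have hF5 : F 5 = h2 (-2) := by simp [hFdef]
  have hF6 : F 6 = h1 3 := by simp [hFdef]
  have hF7 : F 7 = h1 2 := by simp [hFdef]
  have hFA : ∀ p : ℕ, 8 ≤ p → p ≤ l + 3 → F p = h2 ((p - 6 : ℕ) : ZMod l) := by
    intro p hp1 hp2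
    simp only [hFdef]
    rw [if_neg (by omega), if_neg (by omega), if_neg (by omega), if_neg (by omega),
      if_neg (by omega), if_neg (by omega), if_neg (by omega), if_pos hp2]
  have hFB : ∀ p : ℕ, l + 4 ≤ p → F p = h3 ((p - l - 2 : ℕ) : ZMod n) := by
    intro p hp1
    simp only [hFdef]
    rw [if_neg (by omega), if_neg (by omega), if_neg (by omega), if_neg (by omega),
      if_neg (by omega), if_neg (by omega), if_neg (by omega), if_neg (by omega)]
  set g : ZMod (l + n - 4) → V := fun p => F (beltLabel l n p.val) with hgdef
  -- closed forms for g
  have hgA : ∀ p : ZMod (l + n - 4), p.val ≤ l - 3 →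
      g p = h2 ((p.val + 1 : ℕ) : ZMod l) := by
    intro p hp
    simp only [hgdef]
    rcases Nat.eq_zero_or_pos p.val with h0 | hpos
    · rw [h0]
      show F (beltLabel l n 0) = _
      rw [beltLabel, if_pos rfl, hF4, hc12]
      norm_num
    · by_cases hpl : p.val ≤ l - 4
      · rw [beltLabel, if_neg (by omega), if_pos hpl,
          hFA (p.val + 7) (by omega) (by omega), show p.val + 7 - 6 = p.val + 1 by omega]
      · have hpeq : p.val = l - 3 := by omega
        rw [beltLabel, if_neg (by omega), if_neg (by omega), if_pos hpeq, hF5,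
          hpeq, show l - 3 + 1 = l - 2 by omega, hneg2l]
  have hgB : ∀ p : ZMod (l + n - 4), l - 2 ≤ p.val → p.val ≤ l + n - 6 →
      g p = h3 ((p.val + 4 - l : ℕ) : ZMod n) := by
    intro p hp1 hp2
    simp only [hgdef]
    by_cases hmid : p.val ≤ l + n - 7
    · rw [beltLabel, if_neg (by omega), if_neg (by omega), if_neg (by omega), if_pos hmid,
        hFB (p.val + 6) (by omega), show p.val + 6 - l - 2 = p.val + 4 - l by omega]
    · have hpeq : p.val = l + n - 6 := by omega
      rw [beltLabel, if_neg (by omega), if_neg (by omega), if_neg (by omega),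
        if_neg (by omega), if_pos hpeq, hF6, hpeq,
        show l + n - 6 + 4 - l = n - 2 by omega, hneg2n, ← hc31]
  have hgC : ∀ p : ZMod (l + n - 4), p.val = l + n - 5 → g p = h1 2 := by
    intro p hp
    simp only [hgdef]
    rw [hp, beltLabel, if_neg (by omega), if_neg (by omega), if_neg (by omega),
      if_neg (by omega), if_neg (by omega), hF7]
  have hcases : ∀ p : ZMod (l + n - 4), p.val ≤ l - 3 ∨
      (l - 2 ≤ p.val ∧ p.val ≤ l + n - 6) ∨ p.val = l + n - 5 := by
    intro p
    have := ZMod.val_lt p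
    omega
  -- identities in ℕ-cast form
  have hc23' : h2 ((l - 2 : ℕ) : ZMod l) = h3 ((1 : ℕ) : ZMod n) := by
    rw [hneg2l, hc23]; norm_num
  have hc12' : h1 1 = h2 ((1 : ℕ) : ZMod l) := by rw [Nat.cast_one]; exact hc12
  have hc31' : h3 ((n - 2 : ℕ) : ZMod n) = h1 3 := by rw [hneg2n]; exact hc31
  -- element-level distinctness
  have dAB : ∀ a b : ℕ, 1 ≤ a → a ≤ l - 2 → 2 ≤ b → b ≤ n - 2 →
      h2 ((a : ZMod l)) ≠ h3 ((b : ZMod n)) := by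
    intro a b ha1 ha2 hb1 hb2 heq
    by_cases hae : a = l - 2
    · rw [hae, hc23'] at heq
      have := hinj3' 1 b (by omega) (by omega) heq
      omega
    · by_cases ha1' : a = 1
      · rw [ha1', ← hc12'] at heq
        by_cases hbn : b = n - 2
        · rw [hbn, hc31'] at heq
          exact (by decide : (1 : ZMod 5) ≠ 3) (inj1 heq)
        · have hadj : ({v1, h3 ((b : ZMod n))} : Finset V) ∈ K.faces := by
            rw [← heq]; exact (mem1 1).2
          exact noadj_3_v1 b (by omega) (by omega) hadj
      · have hadj : ({v3, h2 ((a : ZMod l))} : Finset V) ∈ K.faces := by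
          rw [heq]; exact (mem3 _).2
        exact noadj_2_v3 a (by omega) (by omega) hadj
  have dAC : ∀ a : ℕ, 1 ≤ a → a ≤ l - 2 → h2 ((a : ZMod l)) ≠ h1 2 := by
    intro a ha1 ha2 heq
    by_cases hae : a = l - 2
    · rw [hae, hc23'] at heq
      have hadj : ({v3, h1 2} : Finset V) ∈ K.faces := by
        rw [← heq]; exact (mem3 _).2
      exact noadj_m1_v3 hadj
    · by_cases ha1' : a = 1
      · rw [ha1', ← hc12'] at heq
        exact (by decide : (1 : ZMod 5) ≠ 2) (inj1 heq)
      · have hadj : ({v1, h2 ((a : ZMod l))} : Finset V) ∈ K.faces := by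
          rw [heq]; exact (mem1 2).2
        exact noadj_2_v1 a (by omega) (by omega) hadj
  have dBC : ∀ b : ℕ, 2 ≤ b → b ≤ n - 2 → h3 ((b : ZMod n)) ≠ h1 2 := by
    intro b hb1 hb2 heq
    have hadj : ({v3, h1 2} : Finset V) ∈ K.faces := by
      rw [← heq]; exact (mem3 _).2
    exact noadj_m1_v3 hadj
  have ginj : Function.Injective g := by
    intro p q heq
    by_contra hnepq
    have hpv : p.val ≠ q.val := fun h => hnepq (ZMod.val_injective _ h)
    rcases hcases p with hp | ⟨hp1, hp2⟩ | hp <;> rcases hcases q with hq | ⟨hq1, hq2⟩ | hq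
    · rw [hgA p hp, hgA q hq] at heq
      exact hpv (by have := hinj2' _ _ (by omega) (by omega) heq; omega)
    · rw [hgA p hp, hgB q hq1 hq2] at heq
      exact dAB _ _ (by omega) (by omega) (by omega) (by omega) heq
    · rw [hgA p hp, hgC q hq] at heq
      exact dAC _ (by omega) (by omega) heq
    · rw [hgB p hp1 hp2, hgA q hq] at heq
      exact dAB _ _ (by omega) (by omega) (by omega) (by omega) heq.symm
    · rw [hgB p hp1 hp2, hgB q hq1 hq2] at heq
      exact hpv (by have := hinj3' _ _ (by omega) (by omega) heq; omega)
    · rw [hgB p hp1 hp2, hgC q hq] at heq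
      exact dBC _ (by omega) (by omega) heq
    · rw [hgC p hp, hgA q hq] at heq
      exact dAC _ (by omega) (by omega) heq.symm
    · rw [hgC p hp, hgB q hq1 hq2] at heq
      exact dBC _ (by omega) (by omega) heq.symm
    · exact hpv (hp.trans hq.symm)
  haveI : Fact (1 < l + n - 4) := ⟨by omega⟩
  have hsucc : ∀ p : ZMod (l + n - 4), (p + 1).val = (p.val + 1) % (l + n - 4) := by
    intro p; rw [ZMod.val_add, ZMod.val_one]
  -- edges of the big belt
  have gedges : ∀ p : ZMod (l + n - 4), ({g p, g (p + 1)} : Finset V) ∈ K.faces := by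
    intro p
    have hpl := ZMod.val_lt p
    have hs := hsucc p
    by_cases hA : p.val ≤ l - 4
    · have hq : (p + 1).val = p.val + 1 := by rw [hs, Nat.mod_eq_of_lt (by omega)]
      rw [hgA p (by omega), hgA (p+1) (by omega), hq]
      have := e2 ((p.val + 1 : ℕ) : ZMod l)
      rwa [show ((p.val + 1 : ℕ) : ZMod l) + 1 = ((p.val + 1 + 1 : ℕ) : ZMod l) by
        push_cast; ring] at this
    · by_cases hA2 : p.val = l - 3
      · have hq : (p + 1).val = l - 2 := by
          rw [hs, hA2, show l - 3 + 1 = l - 2 by omega, Nat.mod_eq_of_lt (by omega)]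
        rw [hgA p (by omega), hgB (p+1) (by omega) (by omega), hq, hA2,
          show l - 3 + 1 = l - 2 by omega, show l - 2 + 4 - l = 2 by omega, hc23']
        have := e3 ((1 : ℕ) : ZMod n)
        rwa [show ((1 : ℕ) : ZMod n) + 1 = ((2 : ℕ) : ZMod n) by push_cast; ring] at this
      · by_cases hB : p.val ≤ l + n - 7
        · have hq : (p + 1).val = p.val + 1 := by rw [hs, Nat.mod_eq_of_lt (by omega)]
          rw [hgB p (by omega) (by omega), hgB (p+1) (by omega) (by omega), hq,
            show p.val + 1 + 4 - l = (p.val + 4 - l) + 1 by omega]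
          have := e3 ((p.val + 4 - l : ℕ) : ZMod n)
          rwa [show ((p.val + 4 - l : ℕ) : ZMod n) + 1 = ((p.val + 4 - l + 1 : ℕ) : ZMod n) by
            push_cast; ring] at this
        · by_cases hB2 : p.val = l + n - 6
          · have hq : (p + 1).val = l + n - 5 := by
              rw [hs, hB2, show l + n - 6 + 1 = l + n - 5 by omega,
                Nat.mod_eq_of_lt (by omega)]
            rw [hgB p (by omega) (by omega), hgC (p+1) hq, hB2,
              show l + n - 6 + 4 - l = n - 2 by omega, hc31']
            have := e1 2
            rwa [show (2 : ZMod 5) + 1 = 3 by decide, Finset.pair_comm] at this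
          · have hC : p.val = l + n - 5 := by omega
            have hq : (p + 1).val = 0 := by
              rw [hs, hC, show l + n - 5 + 1 = l + n - 4 by omega, Nat.mod_self]
            rw [hgC p hC, hgA (p+1) (by omega), hq, show (0 + 1 : ℕ) = 1 by rfl, ← hc12']
            have := e1 1
            rwa [show (1 : ZMod 5) + 1 = 2 by decide, Finset.pair_comm] at this
  -- range of the big belt
  have hv1_2 : v1 = h2 ((0 : ℕ) : ZMod l) := by rw [Nat.cast_zero, h2z]
  have hv3_2 : v3 = h2 ((l - 1 : ℕ) : ZMod l) := by rw [hneg1l, h2l]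
  have hv2_3 : v2 = h3 ((0 : ℕ) : ZMod n) := by rw [Nat.cast_zero, h3z]
  have hv1_3 : v1 = h3 ((n - 1 : ℕ) : ZMod n) := by rw [hneg1n, h3l]
  have zmod5 : ∀ j : ZMod 5, j = 0 ∨ j = 1 ∨ j = 2 ∨ j = 3 ∨ j = 4 := by decide
  have grange : Set.range g = {w | w ≠ v1 ∧ w ≠ v2 ∧ w ≠ v3 ∧
      (({w, v1} : Finset V) ∈ K.faces ∨ ({w, v2} : Finset V) ∈ K.faces ∨
        ({w, v3} : Finset V) ∈ K.faces)} := by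
    apply Set.Subset.antisymm
    · rintro w ⟨p, rfl⟩
      rcases hcases p with hp | ⟨hp1, hp2⟩ | hp
      · rw [hgA p hp]
        refine ⟨?_, (mem2 _).1, ?_, Or.inr (Or.inl ?_)⟩
        · rw [hv1_2]
          intro heq
          have := hinj2' _ _ (by omega) (by omega) heq
          omega
        · rw [hv3_2]
          intro heq
          have := hinj2' _ _ (by omega) (by omega) heq
          omega
        · rw [Finset.pair_comm]; exact (mem2 _).2
      · rw [hgB p hp1 hp2]
        refine ⟨?_, ?_, (mem3 _).1, Or.inr (Or.inr ?_)⟩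
        · rw [hv1_3]
          intro heq
          have := hinj3' _ _ (by omega) (by omega) heq
          omega
        · rw [hv2_3]
          intro heq
          have := hinj3' _ _ (by omega) (by omega) heq
          omega
        · rw [Finset.pair_comm]; exact (mem3 _).2
      · rw [hgC p hp]
        refine ⟨(mem1 2).1, ?_, ?_, Or.inl ?_⟩
        · rw [← h1z]
          exact fun h => (by decide : (2 : ZMod 5) ≠ 0) (inj1 h)
        · rw [← h14]
          exact fun h => (by decide : (2 : ZMod 5) ≠ 4) (inj1 h)
        · rw [Finset.pair_comm]; exact (mem1 2).2
    · rintro w ⟨hw1, hw2, hw3, hadj⟩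
      rcases hadj with hA | hA | hA
      · have hmemw : w ∈ Set.range h1 := by
          rw [hr1]; exact ⟨hw1, by rwa [Finset.pair_comm] at hA⟩
        obtain ⟨j, rfl⟩ := hmemw
        rcases zmod5 j with rfl | rfl | rfl | rfl | rfl
        · exact absurd h1z hw2
        · refine ⟨(0 : ZMod (l + n - 4)), ?_⟩
          rw [hgA 0 (by rw [ZMod.val_zero]; omega), ZMod.val_zero,
            show (0 + 1 : ℕ) = 1 by rfl]
          exact hc12'.symm
        · refine ⟨((l + n - 5 : ℕ) : ZMod (l + n - 4)), ?_⟩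
          exact hgC _ (ZMod.val_cast_of_lt (by omega))
        · refine ⟨((l + n - 6 : ℕ) : ZMod (l + n - 4)), ?_⟩
          have hval : ((l + n - 6 : ℕ) : ZMod (l + n - 4)).val = l + n - 6 :=
            ZMod.val_cast_of_lt (by omega)
          rw [hgB _ (by rw [hval]; omega) (by rw [hval]), hval,
            show l + n - 6 + 4 - l = n - 2 by omega]
          exact hc31'
        · exact absurd h14 hw3
      · have hmemw : w ∈ Set.range h2 := by
          rw [hr2]; exact ⟨hw2, by rwa [Finset.pair_comm] at hA⟩
        obtain ⟨j, rfl⟩ := hmemw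
        have hjlt := ZMod.val_lt j
        have hvj : ((j.val : ℕ) : ZMod l) = j := ZMod.natCast_zmod_val j
        have hj0 : j.val ≠ 0 := by
          intro h
          apply hw1
          rw [hv1_2, ← hvj, h]
        have hjl1 : j.val ≠ l - 1 := by
          intro h
          apply hw3
          rw [hv3_2, ← hvj, h]
        refine ⟨((j.val - 1 : ℕ) : ZMod (l + n - 4)), ?_⟩
        have hval : ((j.val - 1 : ℕ) : ZMod (l + n - 4)).val = j.val - 1 :=
          ZMod.val_cast_of_lt (by omega)
        rw [hgA _ (by rw [hval]; omega), hval, show j.val - 1 + 1 = j.val by omega, hvj]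
      · have hmemw : w ∈ Set.range h3 := by
          rw [hr3]; exact ⟨hw3, by rwa [Finset.pair_comm] at hA⟩
        obtain ⟨j, rfl⟩ := hmemw
        have hjlt := ZMod.val_lt j
        have hvj : ((j.val : ℕ) : ZMod n) = j := ZMod.natCast_zmod_val j
        have hj0 : j.val ≠ 0 := by
          intro h
          apply hw2
          rw [hv2_3, ← hvj, h]
        have hjn1 : j.val ≠ n - 1 := by
          intro h
          apply hw1
          rw [hv1_3, ← hvj, h]
        by_cases hj1 : j.val = 1
        · refine ⟨((l - 3 : ℕ) : ZMod (l + n - 4)), ?_⟩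
          have hval : ((l - 3 : ℕ) : ZMod (l + n - 4)).val = l - 3 :=
            ZMod.val_cast_of_lt (by omega)
          rw [hgA _ (by rw [hval]), hval, show l - 3 + 1 = l - 2 by omega, hc23',
            ← hj1, hvj]
        · refine ⟨((j.val + l - 4 : ℕ) : ZMod (l + n - 4)), ?_⟩
          have hval : ((j.val + l - 4 : ℕ) : ZMod (l + n - 4)).val = j.val + l - 4 :=
            ZMod.val_cast_of_lt (by omega)
          rw [hgB _ (by rw [hval]; omega) (by rw [hval]; omega), hval,
            show j.val + l - 4 + 4 - l = j.val by omega, hvj]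
  have hval_eq : ∀ p q : ZMod (l + n - 4), q.val = p.val + 1 → q = p + 1 := by
    intro p q h
    apply ZMod.val_injective
    rw [hsucc, Nat.mod_eq_of_lt (by have := ZMod.val_lt q; omega), h]
  have hwrap : ∀ p q : ZMod (l + n - 4), p.val = 0 → q.val = l + n - 5 → p = q + 1 := by
    intro p q hp hq
    apply ZMod.val_injective
    rw [hsucc, hq, show l + n - 5 + 1 = l + n - 4 by omega, Nat.mod_self, hp]
  have hchord' : ∀ p q : ZMod (l + n - 4), p.val < q.val →
      ({g p, g q} : Finset V) ∈ K.faces → q = p + 1 ∨ p = q + 1 := by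
    intro p q hlt hface
    have hpl := ZMod.val_lt p
    have hql := ZMod.val_lt q
    rcases hcases p with hp | ⟨hp1, hp2⟩ | hp
    · rcases hcases q with hq | ⟨hq1, hq2⟩ | hq
      · -- A A
        rw [hgA p hp, hgA q hq] at hface
        rcases chord2 _ _ (by omega) (by omega) (by omega) hface with h | h | h | h
        · left; exact hval_eq p q (by omega)
        · omega
        · omega
        · omega
      · -- A B
        rw [hgA p hp, hgB q hq1 hq2] at hface
        by_cases hae : p.val = l - 3
        · rw [hae, show l - 3 + 1 = l - 2 by omega, hc23'] at hface
          rcases chord3 1 _ (by omega) (by omega) (by omega) hface with h | h | h | h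
          · left; exact hval_eq p q (by omega)
          · omega
          · omega
          · omega
        · exfalso
          by_cases hbn : q.val = l + n - 6
          · rw [hbn, show l + n - 6 + 4 - l = n - 2 by omega, hc31'] at hface
            by_cases ha1 : p.val = 0
            · rw [ha1, show (0 + 1 : ℕ) = 1 from rfl, ← hc12'] at hface
              rcases c1 1 3 (by decide) hface with h | h
              · exact (by decide : ¬ ((3 : ZMod 5) = 1 + 1)) h
              · exact (by decide : ¬ ((1 : ZMod 5) = 3 + 1)) h
            · refine four_belt_absurd K hB4 (x0 := h2 ((p.val + 1 : ℕ) : ZMod l))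
                (x1 := v2) (x2 := v1) (x3 := h1 3) (mem2 _).1 ?_ ?_ hne21 ?_
                (Ne.symm (mem1 3).1) ?_ hv21 (mem1 3).2 ?_ ?_ noadj_c31_v2
              · intro heq; rw [hv1_2] at heq
                have := hinj2' _ _ (by omega) (by omega) heq; omega
              · intro heq
                exact dAB (p.val + 1) (n - 2) (by omega) (by omega) (by omega) (by omega)
                  (heq.trans hc31'.symm)
              · intro heq; rw [← h1z] at heq
                exact (by decide : (0 : ZMod 5) ≠ 3) (inj1 heq)
              · rw [Finset.pair_comm]; exact (mem2 _).2
              · rwa [Finset.pair_comm] at hface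
              · intro hmem
                exact noadj_2_v1 (p.val + 1) (by omega) (by omega)
                  (by rwa [Finset.pair_comm] at hmem)
          · by_cases ha1 : p.val = 0
            · rw [ha1, show (0 + 1 : ℕ) = 1 from rfl, ← hc12'] at hface
              refine four_belt_absurd K hB4 (x0 := h3 ((q.val + 4 - l : ℕ) : ZMod n))
                (x1 := v3) (x2 := v1) (x3 := h1 1) (mem3 _).1 ?_ ?_ hne31
                ?_ (Ne.symm (mem1 1).1) ?_ hv31 (mem1 1).2 ?_ ?_ noadj_c12_v3
              · intro heq; rw [hv1_3] at heq
                have := hinj3' _ _ (by omega) (by omega) heq; omega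
              · intro heq
                exact dAB 1 (q.val + 4 - l) (by omega) (by omega) (by omega) (by omega)
                  (by rw [← hc12']; exact heq.symm)
              · intro heq; rw [← h14] at heq
                exact (by decide : (4 : ZMod 5) ≠ 1) (inj1 heq)
              · rw [Finset.pair_comm]; exact (mem3 _).2
              · exact hface
              · intro hmem
                exact noadj_3_v1 (q.val + 4 - l) (by omega) (by omega)
                  (by rwa [Finset.pair_comm] at hmem)
            · refine four_belt_absurd K hB4 (x0 := h2 ((p.val + 1 : ℕ) : ZMod l))
                (x1 := v2) (x2 := v3) (x3 := h3 ((q.val + 4 - l : ℕ) : ZMod n))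
                (mem2 _).1 ?_ ?_ hne23 ?_ (Ne.symm (mem3 _).1) ?_ hv23 (mem3 _).2 ?_ ?_
                (noadj_3_v2 (q.val + 4 - l) (by omega) (by omega))
              · intro heq; rw [hv3_2] at heq
                have := hinj2' _ _ (by omega) (by omega) heq; omega
              · exact dAB (p.val + 1) (q.val + 4 - l) (by omega) (by omega) (by omega)
                  (by omega)
              · intro heq; rw [hv2_3] at heq
                have := hinj3' _ _ (by omega) (by omega) heq; omega
              · rw [Finset.pair_comm]; exact (mem2 _).2
              · rwa [Finset.pair_comm] at hface
              · intro hmem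
                exact noadj_2_v3 (p.val + 1) (by omega) (by omega)
                  (by rwa [Finset.pair_comm] at hmem)
      · -- A C
        rw [hgA p hp, hgC q hq] at hface
        by_cases ha1 : p.val = 0
        · right; exact hwrap p q ha1 hq
        · exfalso
          by_cases hae : p.val = l - 3
          · rw [hae, show l - 3 + 1 = l - 2 by omega, hc23'] at hface
            refine four_belt_absurd K hB4 (x0 := h3 ((1 : ℕ) : ZMod n))
              (x1 := v3) (x2 := v1) (x3 := h1 2) (mem3 _).1 ?_ ?_ hne31
              ?_ (Ne.symm (mem1 2).1) ?_ hv31 (mem1 2).2 ?_ ?_ noadj_m1_v3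
            · intro heq; rw [hv1_3] at heq
              have := hinj3' _ _ (by omega) (by omega) heq; omega
            · intro heq
              exact noadj_m1_v3 (by rw [← heq]; exact (mem3 _).2)
            · intro heq; rw [← h14] at heq
              exact (by decide : (4 : ZMod 5) ≠ 2) (inj1 heq)
            · rw [Finset.pair_comm]; exact (mem3 _).2
            · rwa [Finset.pair_comm] at hface
            · intro hmem
              exact noadj_3_v1 1 (by omega) (by omega)
                (by rwa [Finset.pair_comm] at hmem)
          · refine four_belt_absurd K hB4 (x0 := h2 ((p.val + 1 : ℕ) : ZMod l))
              (x1 := v2) (x2 := v1) (x3 := h1 2) (mem2 _).1 ?_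
              (dAC (p.val + 1) (by omega) (by omega)) hne21
              ?_ (Ne.symm (mem1 2).1) ?_ hv21 (mem1 2).2 ?_ ?_ noadj_m1_v2
            · intro heq; rw [hv1_2] at heq
              have := hinj2' _ _ (by omega) (by omega) heq; omega
            · intro heq; rw [← h1z] at heq
              exact (by decide : (0 : ZMod 5) ≠ 2) (inj1 heq)
            · rw [Finset.pair_comm]; exact (mem2 _).2
            · rwa [Finset.pair_comm] at hface
            · intro hmem
              exact noadj_2_v1 (p.val + 1) (by omega) (by omega)
                (by rwa [Finset.pair_comm] at hmem)
    · rcases hcases q with hq | ⟨hq1, hq2⟩ | hq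
      · omega
      · -- B B
        rw [hgB p hp1 hp2, hgB q hq1 hq2] at hface
        rcases chord3 _ _ (by omega) (by omega) (by omega) hface with h | h | h | h
        · left; exact hval_eq p q (by omega)
        · omega
        · omega
        · omega
      · -- B C
        rw [hgB p hp1 hp2, hgC q hq] at hface
        by_cases hbn : p.val = l + n - 6
        · left; exact hval_eq p q (by omega)
        · exfalso
          refine four_belt_absurd K hB4 (x0 := h3 ((p.val + 4 - l : ℕ) : ZMod n))
            (x1 := v3) (x2 := v1) (x3 := h1 2) (mem3 _).1 ?_
            (dBC (p.val + 4 - l) (by omega) (by omega)) hne31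
            ?_ (Ne.symm (mem1 2).1) ?_ hv31 (mem1 2).2 ?_ ?_ noadj_m1_v3
          · intro heq; rw [hv1_3] at heq
            have := hinj3' _ _ (by omega) (by omega) heq; omega
          · intro heq; rw [← h14] at heq
            exact (by decide : (4 : ZMod 5) ≠ 2) (inj1 heq)
          · rw [Finset.pair_comm]; exact (mem3 _).2
          · rwa [Finset.pair_comm] at hface
          · intro hmem
            exact noadj_3_v1 (p.val + 4 - l) (by omega) (by omega)
              (by rwa [Finset.pair_comm] at hmem)
    · omega
  have gchord : ∀ i j : ZMod (l + n - 4), i ≠ j →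
      ({g i, g j} : Finset V) ∈ K.faces → j = i + 1 ∨ i = j + 1 := by
    intro i j hij hface
    have hv : i.val ≠ j.val := fun h => hij (ZMod.val_injective _ h)
    rcases Nat.lt_or_ge i.val j.val with h | h
    · exact hchord' i j h hface
    · rcases hchord' j i (by omega) (by rwa [Finset.pair_comm] at hface) with h' | h'
      · exact Or.inr h'
      · exact Or.inl h'
  have gtri : ∀ i j m : ZMod (l + n - 4), i ≠ j → j ≠ m → i ≠ m →
      ({g i, g j, g m} : Finset V) ∉ K.faces := by
    intro i j m hij hjm him hmem
    have cc1 := gchord i j hij (sub_pair_mem K hmem (by simp) (by simp))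
    have cc2 := gchord j m hjm (sub_pair_mem K hmem (by simp) (by simp))
    have cc3 := gchord i m him (sub_pair_mem K hmem (by simp) (by simp))
    rcases cc1 with h1 | h1 <;> rcases cc2 with h2 | h2 <;> rcases cc3 with h3 | h3
    · refine zmod_cast_ne_zero (l + n - 4) 1 (by omega) (by omega) ?_
      push_cast
      linear_combination h3 - h1 - h2
    · refine zmod_cast_ne_zero (l + n - 4) 3 (by omega) (by omega) ?_
      push_cast
      linear_combination - h1 - h2 - h3
    · refine zmod_cast_ne_zero (l + n - 4) 1 (by omega) (by omega) ?_
      push_cast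
      linear_combination h1 - h2 - h3
    · exact hij (h3.trans h2.symm)
    · exact hij (add_right_cancel (h3.symm.trans h2))
    · exact him (h1.trans h2.symm)
    · refine zmod_cast_ne_zero (l + n - 4) 3 (by omega) (by omega) ?_
      push_cast
      linear_combination - h1 - h2 - h3
    · exact hjm (add_right_cancel (h1.symm.trans h3))
  -- inverse of the labelling
  have hlab : ∀ p : ℕ, 4 ≤ p → p ≤ l + n - 1 → ∃ i : ZMod (l + n - 4),
      beltLabel l n i.val = p := by
    intro p hp4 hpl
    by_cases h4 : p = 4
    · exact ⟨0, by rw [ZMod.val_zero, beltLabel, if_pos rfl, h4]⟩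
    · by_cases h5 : p = 5
      · refine ⟨((l - 3 : ℕ) : ZMod (l + n - 4)), ?_⟩
        rw [ZMod.val_cast_of_lt (by omega), beltLabel, if_neg (by omega),
          if_neg (by omega), if_pos rfl, h5]
      · by_cases h6 : p = 6
        · refine ⟨((l + n - 6 : ℕ) : ZMod (l + n - 4)), ?_⟩
          rw [ZMod.val_cast_of_lt (by omega), beltLabel, if_neg (by omega),
            if_neg (by omega), if_neg (by omega), if_neg (by omega), if_pos rfl, h6]
        · by_cases h7 : p = 7
          · refine ⟨((l + n - 5 : ℕ) : ZMod (l + n - 4)), ?_⟩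
            rw [ZMod.val_cast_of_lt (by omega), beltLabel, if_neg (by omega),
              if_neg (by omega), if_neg (by omega), if_neg (by omega),
              if_neg (by omega), h7]
          · by_cases hA : p ≤ l + 3
            · refine ⟨((p - 7 : ℕ) : ZMod (l + n - 4)), ?_⟩
              rw [ZMod.val_cast_of_lt (by omega), beltLabel, if_neg (by omega),
                if_pos (by omega)]
              omega
            · refine ⟨((p - 6 : ℕ) : ZMod (l + n - 4)), ?_⟩
              rw [ZMod.val_cast_of_lt (by omega), beltLabel, if_neg (by omega),
                if_neg (by omega), if_neg (by omega), if_pos (by omega)]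
              omega
  have hFg : ∀ (p : ℕ) (i : ZMod (l + n - 4)), beltLabel l n i.val = p → F p = g i := by
    intro p i h
    simp only [hgdef]
    rw [h]
  have hFbig : ∀ p : ℕ, 4 ≤ p → p ≤ l + n - 1 → F p ∈ Set.range g := by
    intro p h1 h2
    obtain ⟨i, hi⟩ := hlab p h1 h2
    exact ⟨i, (hFg p i hi).symm⟩
  have hinjF : Set.InjOn F (Set.Icc 1 (l + n - 1)) := by
    intro p hp q hq heq
    simp only [Set.mem_Icc] at hp hq
    by_contra hnepq
    by_cases hp4 : 4 ≤ p
    · by_cases hq4 : 4 ≤ q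
      · obtain ⟨i, hi⟩ := hlab p hp4 hp.2
        obtain ⟨j, hj⟩ := hlab q hq4 hq.2
        have hijne : i ≠ j := fun h => hnepq (by rw [← hi, ← hj, h])
        exact hijne (ginj (by rw [← hFg p i hi, ← hFg q j hj, heq]))
      · have hmem := hFbig p hp4 hp.2
        rw [grange] at hmem
        obtain ⟨hx1, hx2, hx3, _⟩ := hmem
        have hq3 : q = 1 ∨ q = 2 ∨ q = 3 := by omega
        rcases hq3 with rfl | rfl | rfl
        · exact hx1 (by rw [← hF1, heq])
        · exact hx2 (by rw [← hF2, heq])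
        · exact hx3 (by rw [← hF3, heq])
    · by_cases hq4 : 4 ≤ q
      · have hmem := hFbig q hq4 hq.2
        rw [grange] at hmem
        obtain ⟨hx1, hx2, hx3, _⟩ := hmem
        have hp3 : p = 1 ∨ p = 2 ∨ p = 3 := by omega
        rcases hp3 with rfl | rfl | rfl
        · exact hx1 (by rw [← hF1, ← heq])
        · exact hx2 (by rw [← hF2, ← heq])
        · exact hx3 (by rw [← hF3, ← heq])
      · have hp3 : p = 1 ∨ p = 2 ∨ p = 3 := by omega
        have hq3 : q = 1 ∨ q = 2 ∨ q = 3 := by omega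
        rcases hp3 with rfl | rfl | rfl <;> rcases hq3 with rfl | rfl | rfl <;>
          simp only [hF1, hF2, hF3] at heq <;>
          first
          | exact hnepq rfl
          | exact hne21 heq.symm
          | exact hne21 heq
          | exact hne31 heq.symm
          | exact hne31 heq
          | exact hne23 heq
          | exact hne23 heq.symm
  obtain ⟨hvert, _hdim, _hpure, _hedge2, _hlc, _hc0, _he⟩ := hS
  refine ⟨l, n, hl5, hn5, F, hinjF, fun i _ => hvert (F i), ?_, ?_, ?_, ?_,
    g, ⟨by omega, ginj, gedges, gchord, gtri⟩, ?_, fun p => by simp only [hgdef]⟩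
  · rw [hF1, hF2, hF3]; exact htriple
  · rw [hF1]; exact hdeg1
  · rw [hF2]
  · rw [hF3]
  · rw [hF1, hF2, hF3]; exact grange
end
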